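/- arXiv:1204.0314 — 5 statements merged into one kernel-verified Lean document; each statement's English description precedes it below -/
import Mathlib

section
/- Let u and v be two solutions on (a,b) of the second-order generalized ODE 𝒟_m 𝒟_s f = r f (meaning f ∈ D(𝒟_s) and 𝒟_s f(x) − 𝒟_s f(y) = r ∫_y^x f dm). Then the Wronskian W(x) = v(x)·𝒟_s u(x) − u(x)·𝒟_s v(x) is constant on (a,b). -/
open MeasureTheory Real Filter

/-- Integration by parts for two Stieltjes-type "primitives" against two
(possibly different) measures, assuming the second measure has no atoms in the interval. -/
lemma ibp_aux (y x : ℝ) (hyx : y < x) (μ ν : Measure ℝ)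
    (hμfin : μ (Set.Ioc y x) ≠ ⊤) (hνfin : ν (Set.Ioc y x) ≠ ⊤)
    (hν : ∀ t ∈ Set.Ioc y x, ν {t} = 0)
    (f g F G : ℝ → ℝ)
    (hF : IntegrableOn F (Set.Ioc y x) μ) (hG : IntegrableOn G (Set.Ioc y x) ν)
    (hf : ∀ t ∈ Set.Ioc y x, f t - f y = ∫ z in Set.Ioc y t, F z ∂μ)
    (hg : ∀ t ∈ Set.Ioc y x, g t - g y = ∫ z in Set.Ioc y t, G z ∂ν) :
    f x * g x - f y * g y =
      (∫ z in Set.Ioc y x, f z * G z ∂ν) + (∫ z in Set.Ioc y x, g z * F z ∂μ) := by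
  set μ' := μ.restrict (Set.Ioc y x) with hμ'
  set ν' := ν.restrict (Set.Ioc y x) with hν'
  haveI : IsFiniteMeasure μ' := ⟨by simpa [hμ', Measure.restrict_apply_univ] using hμfin.lt_top⟩
  haveI : IsFiniteMeasure ν' := ⟨by simpa [hν', Measure.restrict_apply_univ] using hνfin.lt_top⟩
  set A := ∫ z in (Set.Ioc y x), F z ∂μ with hA
  set B := ∫ z in (Set.Ioc y x), G z ∂ν with hB
  set φ : ℝ → ℝ := fun t => ∫ z in Set.Ioc y t, F z ∂μ with hφ
  set ψ : ℝ → ℝ := fun t => ∫ z in Set.Ioc y t, G z ∂ν with hψ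
  set ρ : ℝ → ℝ := fun t => ∫ z in Set.Ioc t x, F z ∂μ with hρ
  -- the two indicator kernels
  set k₁ : ℝ × ℝ → ℝ := Set.indicator {p : ℝ × ℝ | p.2 < p.1} (fun p => F p.1 * G p.2) with hk₁
  set k₂ : ℝ × ℝ → ℝ := Set.indicator {p : ℝ × ℝ | p.1 ≤ p.2} (fun p => F p.1 * G p.2) with hk₂
  have hFG : Integrable (fun p : ℝ × ℝ => F p.1 * G p.2) (μ'.prod ν') := hF.mul_prod hG
  have hm₁ : MeasurableSet {p : ℝ × ℝ | p.2 < p.1} := measurableSet_lt measurable_snd measurable_fst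
  have hm₂ : MeasurableSet {p : ℝ × ℝ | p.1 ≤ p.2} := measurableSet_le measurable_fst measurable_snd
  have hk₁i : Integrable k₁ (μ'.prod ν') := hFG.indicator hm₁
  have hk₂i : Integrable k₂ (μ'.prod ν') := hFG.indicator hm₂
  -- sections of k₁ and k₂
  have hsec₁ : ∀ w : ℝ, (fun z => k₁ (w, z)) = (Set.Iio w).indicator (fun z => F w * G z) := by
    intro w; funext z
    by_cases h : z < w <;> simp [hk₁, Set.indicator, h]
  have hsec₁' : ∀ z : ℝ, (fun w => k₁ (w, z)) = (Set.Ioi z).indicator (fun w => F w * G z) := by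
    intro z; funext w
    by_cases h : z < w <;> simp [hk₁, Set.indicator, h]
  have hsec₂' : ∀ z : ℝ, (fun w => k₂ (w, z)) = (Set.Iic z).indicator (fun w => F w * G z) := by
    intro z; funext w
    by_cases h : w ≤ z <;> simp [hk₂, Set.indicator, h]
  -- inner integral computations
  have hinner₁ : ∀ w ∈ (Set.Ioc y x), (∫ z, k₁ (w, z) ∂ν') = F w * ψ w := by
    intro w hw
    rw [hsec₁ w, integral_indicator measurableSet_Iio, hν',
      Measure.restrict_restrict measurableSet_Iio]
    have hset : Set.Iio w ∩ (Set.Ioc y x) = Set.Ioo y w := by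
      ext z; constructor
      · rintro ⟨h1, h2, h3⟩; exact ⟨h2, h1⟩
      · rintro ⟨h1, h2⟩; exact ⟨h2, h1, h2.le.trans hw.2⟩
    rw [hset, integral_const_mul]
    congr 1
    apply setIntegral_congr_set
    have : Set.Ioo y w =ᵐ[ν] Set.Ioc y w := by
      rw [Filter.eventuallyEq_set]
      have hnull : ν {w} = 0 := hν w hw
      filter_upwards [measure_eq_zero_iff_ae_notMem.mp hnull] with z hz
      simp only [Set.mem_Ioo, Set.mem_Ioc]
      constructor
      · rintro ⟨h1, h2⟩; exact ⟨h1, h2.le⟩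
      · rintro ⟨h1, h2⟩; exact ⟨h1, lt_of_le_of_ne h2 (by simpa using hz)⟩
    exact this
  have hinner₁' : ∀ z ∈ (Set.Ioc y x), (∫ w, k₁ (w, z) ∂μ') = G z * ρ z := by
    intro z hz
    rw [hsec₁' z, integral_indicator measurableSet_Ioi, hμ',
      Measure.restrict_restrict measurableSet_Ioi]
    have hset : Set.Ioi z ∩ (Set.Ioc y x) = Set.Ioc z x := by
      ext w; constructor
      · rintro ⟨h1, h2, h3⟩; exact ⟨h1, h3⟩
      · rintro ⟨h1, h2⟩; exact ⟨h1, hz.1.trans h1, h2⟩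
    rw [hset]
    rw [show (fun w => F w * G z) = fun w => G z * F w from funext fun w => mul_comm _ _,
      integral_const_mul]
  have hinner₂' : ∀ z ∈ (Set.Ioc y x), (∫ w, k₂ (w, z) ∂μ') = G z * φ z := by
    intro z hz
    rw [hsec₂' z, integral_indicator measurableSet_Iic, hμ',
      Measure.restrict_restrict measurableSet_Iic]
    have hset : Set.Iic z ∩ (Set.Ioc y x) = Set.Ioc y z := by
      ext w; constructor
      · rintro ⟨h1, h2, h3⟩; exact ⟨h2, h1⟩
      · rintro ⟨h1, h2⟩; exact ⟨h2, h1, h2.trans hz.2⟩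
    rw [hset]
    rw [show (fun w => F w * G z) = fun w => G z * F w from funext fun w => mul_comm _ _,
      integral_const_mul]
  -- integrability of marginals
  have hGρ : Integrable (fun z => G z * ρ z) ν' := by
    refine (hk₁i.integral_prod_right).congr ?_
    filter_upwards [ae_restrict_mem measurableSet_Ioc] with z hz
    exact hinner₁' z hz
  have hGφ : Integrable (fun z => G z * φ z) ν' := by
    refine (hk₂i.integral_prod_right).congr ?_
    filter_upwards [ae_restrict_mem measurableSet_Ioc] with z hz
    exact hinner₂' z hz
  have hFψ : Integrable (fun w => F w * ψ w) μ' := by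
    refine (hk₁i.integral_prod_left).congr ?_
    filter_upwards [ae_restrict_mem measurableSet_Ioc] with w hw
    exact hinner₁ w hw
  -- Fubini
  have hswap : (∫ z in (Set.Ioc y x), G z * ρ z ∂ν) = ∫ w in (Set.Ioc y x), F w * ψ w ∂μ := by
    have := integral_integral_swap (f := fun w z => k₁ (w, z)) (μ := μ') (ν := ν')
      (by exact hk₁i)
    calc (∫ z in (Set.Ioc y x), G z * ρ z ∂ν) = ∫ z, G z * ρ z ∂ν' := rfl
      _ = ∫ z, ∫ w, k₁ (w, z) ∂μ' ∂ν' := by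
          refine (integral_congr_ae ?_).symm
          filter_upwards [ae_restrict_mem measurableSet_Ioc] with z hz
          exact hinner₁' z hz
      _ = ∫ w, ∫ z, k₁ (w, z) ∂ν' ∂μ' := this.symm
      _ = ∫ w, F w * ψ w ∂μ' := by
          refine integral_congr_ae ?_
          filter_upwards [ae_restrict_mem measurableSet_Ioc] with w hw
          exact hinner₁ w hw
      _ = ∫ w in (Set.Ioc y x), F w * ψ w ∂μ := rfl
  -- split A over Ioc y z ∪ Ioc z x
  have hAsplit : ∀ z ∈ (Set.Ioc y x), φ z + ρ z = A := by
    intro z hz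
    rw [hφ, hρ, hA]
    rw [← setIntegral_union]
    · rw [Set.Ioc_union_Ioc_eq_Ioc hz.1.le hz.2]
    · exact Set.Ioc_disjoint_Ioc_of_le le_rfl
    · exact measurableSet_Ioc
    · exact hF.mono_set (Set.Ioc_subset_Ioc le_rfl hz.2)
    · exact hF.mono_set (Set.Ioc_subset_Ioc hz.1.le le_rfl)
  -- the double-integral identity
  have hkey : (∫ z in (Set.Ioc y x), G z * φ z ∂ν) + (∫ w in (Set.Ioc y x), F w * ψ w ∂μ) = A * B := by
    rw [← hswap, ← integral_add hGφ hGρ]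
    have : (∫ z, (G z * φ z + G z * ρ z) ∂ν') = ∫ z, A * G z ∂ν' := by
      refine integral_congr_ae ?_
      filter_upwards [ae_restrict_mem measurableSet_Ioc] with z hz
      rw [← mul_add, hAsplit z hz, mul_comm]
    rw [show (∫ z, (G z * φ z + G z * ρ z) ∂ν.restrict (Set.Ioc y x)) = ∫ z, A * G z ∂ν' from this,
      integral_const_mul, hB, hν']
  -- split the two target integrals
  have hfy : Integrable (fun z => f y * G z) ν' := hG.const_mul _
  have hgy : Integrable (fun w => g y * F w) μ' := hF.const_mul _
  have ht1 : (∫ z in (Set.Ioc y x), f z * G z ∂ν) = f y * B + ∫ z in (Set.Ioc y x), G z * φ z ∂ν := by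
    have : (∫ z in (Set.Ioc y x), f z * G z ∂ν) = ∫ z in (Set.Ioc y x), (f y * G z + G z * φ z) ∂ν := by
      refine setIntegral_congr_fun measurableSet_Ioc fun z hz => ?_
      have := hf z hz
      have hfz : f z = f y + φ z := by rw [hφ]; simp only; linarith [hf z hz]
      rw [hfz]; ring
    rw [this, integral_add hfy hGφ, integral_const_mul]
  have ht2 : (∫ w in (Set.Ioc y x), g w * F w ∂μ) = g y * A + ∫ w in (Set.Ioc y x), F w * ψ w ∂μ := by
    have : (∫ w in (Set.Ioc y x), g w * F w ∂μ) = ∫ w in (Set.Ioc y x), (g y * F w + F w * ψ w) ∂μ := by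
      refine setIntegral_congr_fun measurableSet_Ioc fun w hw => ?_
      have hgw : g w = g y + ψ w := by rw [hψ]; simp only; linarith [hg w hw]
      rw [hgw]; ring
    rw [this, integral_add hgy hFψ, integral_const_mul]
  have hfx : f x = f y + A := by
    have := hf x ⟨hyx, le_refl x⟩; rw [hA]; linarith
  have hgx : g x = g y + B := by
    have := hg x ⟨hyx, le_refl x⟩; rw [hB]; linarith
  rw [ht1, ht2, hfx, hgx]
  linarith [hkey]

/-- if `u` and `v` both solve `𝒟_m 𝒟_s f = r f` on `(a,b)`, then the
Wronskian `W(x) = v(x) 𝒟_s u(x) − u(x) 𝒟_s v(x)` is constant on `(a,b)`. -/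
theorem wronskian_constant
    (a b : EReal) (hab : a < b)
    (I : Set ℝ) (hI : I = {x : ℝ | a < (x : EReal) ∧ (x : EReal) < b})
    (s m : ℝ → ℝ)
    (hs : StrictMonoOn s I) (hscont : ContinuousOn s I)
    (hm : StrictMonoOn m I) (hmcont : ContinuousOn m I)
    -- Lebesgue--Stieltjes measures of `s` and `m` on `I`
    (μs μm : Measure ℝ)
    (hμs : ∀ x ∈ I, ∀ y ∈ I, x ≤ y → μs (Set.Ioc x y) = ENNReal.ofReal (s y - s x))
    (hμm : ∀ x ∈ I, ∀ y ∈ I, x ≤ y → μm (Set.Ioc x y) = ENNReal.ofReal (m y - m x))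
    (r : ℝ) (hr : 0 < r)
    (u v us vs : ℝ → ℝ)
    -- `us = 𝒟_s u` and `vs = 𝒟_s v`
    (hu : ∀ x ∈ I, ∀ y ∈ I, u x - u y = ∫ z in y..x, us z ∂μs)
    (hv : ∀ x ∈ I, ∀ y ∈ I, v x - v y = ∫ z in y..x, vs z ∂μs)
    -- `𝒟_m 𝒟_s u = r u` and `𝒟_m 𝒟_s v = r v`
    (hus : ∀ x ∈ I, ∀ y ∈ I, us x - us y = r * ∫ z in y..x, u z ∂μm)
    (hvs : ∀ x ∈ I, ∀ y ∈ I, vs x - vs y = r * ∫ z in y..x, v z ∂μm)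
    (huint : ∀ x ∈ I, ∀ y ∈ I, IntervalIntegrable u μm y x ∧ IntervalIntegrable us μs y x)
    (hvint : ∀ x ∈ I, ∀ y ∈ I, IntervalIntegrable v μm y x ∧ IntervalIntegrable vs μs y x) :
    ∀ x ∈ I, ∀ y ∈ I,
      v x * us x - u x * vs x = v y * us y - u y * vs y := by
  -- convexity of I
  have hconv : ∀ {p q t : ℝ}, p ∈ I → q ∈ I → p ≤ t → t ≤ q → t ∈ I := by
    intro p q t hp hq h1 h2
    rw [hI] at *
    exact ⟨lt_of_lt_of_le hp.1 (EReal.coe_le_coe_iff.2 h1),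
      lt_of_le_of_lt (EReal.coe_le_coe_iff.2 h2) hq.2⟩
  -- openness of I
  have hIopen : IsOpen I := by
    have : I = ((↑) : ℝ → EReal) ⁻¹' (Set.Ioo a b) := by
      rw [hI]; ext t; simp [Set.mem_Ioo]
    rw [this]
    exact isOpen_Ioo.preimage continuous_coe_real_ereal
  -- μs has no atoms inside I
  have hatom : ∀ t ∈ I, μs {t} = 0 := by
    intro t ht
    by_contra h
    have hpos : 0 < μs {t} := pos_iff_ne_zero.mpr h
    obtain ⟨ε, hε0, hεlt⟩ : ∃ ε > 0, ENNReal.ofReal ε < μs {t} := by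
      rcases eq_or_ne (μs {t}) ⊤ with htop | htop
      · exact ⟨1, one_pos, by simp [htop]⟩
      · have hpos' : 0 < (μs {t}).toReal := ENNReal.toReal_pos h htop
        refine ⟨(μs {t}).toReal / 2, by linarith, ?_⟩
        conv_rhs => rw [← ENNReal.ofReal_toReal htop]
        exact (ENNReal.ofReal_lt_ofReal_iff_of_nonneg (by linarith)).2 (by linarith)
    -- continuity of s at t
    have hct : ContinuousAt s t := hscont.continuousAt (hIopen.mem_nhds ht)
    rw [Metric.continuousAt_iff] at hct
    obtain ⟨δ, hδ0, hδ⟩ := hct ε hε0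
    obtain ⟨δ', hδ'0, hball⟩ := Metric.isOpen_iff.1 hIopen t ht
    set q := t - min δ δ' / 2 with hq
    have hmin : 0 < min δ δ' := lt_min hδ0 hδ'0
    have hqt : q < t := by rw [hq]; linarith
    have hdist : dist q t < min δ δ' := by
      rw [Real.dist_eq, hq]
      rw [abs_of_nonpos (by linarith)]
      linarith
    have hqI : q ∈ I := hball (by
      rw [Metric.mem_ball]
      exact lt_of_lt_of_le hdist (min_le_right _ _))
    have hsq : |s q - s t| < ε := hδ (lt_of_lt_of_le hdist (min_le_left _ _))
    have hle : μs {t} ≤ μs (Set.Ioc q t) :=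
      measure_mono (by intro z hz; simp only [Set.mem_singleton_iff] at hz
                       rw [hz]; exact ⟨hqt, le_refl t⟩)
    rw [hμs q hqI t ht hqt.le] at hle
    have : μs {t} ≤ ENNReal.ofReal ε := by
      refine hle.trans (ENNReal.ofReal_le_ofReal ?_)
      have := abs_lt.1 hsq
      linarith [this.1]
    exact absurd (hεlt.trans_le this) (lt_irrefl _)
  -- main claim for y < x
  suffices H : ∀ x ∈ I, ∀ y ∈ I, y < x →
      v x * us x - u x * vs x = v y * us y - u y * vs y by
    intro x hx y hy
    rcases lt_trichotomy y x with h | h | h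
    · exact H x hx y hy h
    · rw [h]
    · exact (H y hy x hx h).symm
  intro x hx y hy hyx
  have hsub : Set.Ioc y x ⊆ I := fun t ht => hconv hy hx ht.1.le ht.2
  have hμsfin : μs (Set.Ioc y x) ≠ ⊤ := by
    rw [hμs y hy x hx hyx.le]; exact ENNReal.ofReal_ne_top
  have hμmfin : μm (Set.Ioc y x) ≠ ⊤ := by
    rw [hμm y hy x hx hyx.le]; exact ENNReal.ofReal_ne_top
  have hatom' : ∀ t ∈ Set.Ioc y x, μs {t} = 0 := fun t ht => hatom t (hsub ht)
  have e1 := ibp_aux y x hyx μm μs hμmfin hμsfin hatom' us v (fun z => r * u z) vs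
    ((huint x hx y hy).1.1.const_mul r) (hvint x hx y hy).2.1
    (fun t ht => by
      rw [integral_const_mul, ← intervalIntegral.integral_of_le ht.1.le]
      exact hus t (hsub ht) y hy)
    (fun t ht => by
      rw [← intervalIntegral.integral_of_le ht.1.le]
      exact hv t (hsub ht) y hy)
  have e2 := ibp_aux y x hyx μm μs hμmfin hμsfin hatom' vs u (fun z => r * v z) us
    ((hvint x hx y hy).1.1.const_mul r) (huint x hx y hy).2.1
    (fun t ht => by
      rw [integral_const_mul, ← intervalIntegral.integral_of_le ht.1.le]
      exact hvs t (hsub ht) y hy)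
    (fun t ht => by
      rw [← intervalIntegral.integral_of_le ht.1.le]
      exact hu t (hsub ht) y hy)
  have c1 : (∫ z in Set.Ioc y x, us z * vs z ∂μs) = ∫ z in Set.Ioc y x, vs z * us z ∂μs :=
    integral_congr_ae (Eventually.of_forall fun z => mul_comm _ _)
  have c2 : (∫ z in Set.Ioc y x, v z * (r * u z) ∂μm) = ∫ z in Set.Ioc y x, u z * (r * v z) ∂μm :=
    integral_congr_ae (Eventually.of_forall fun z => by ring)
  linear_combination e1 - e2 + c1 + c2
end

section
/- Suppose a is an accessible boundary (∫_a^c ds(x) ∫_x^c dm(y) < ∞) for the generalized operator L = 𝒟_m 𝒟_s, and let u_r, v_r be the positive increasing (resp. decreasing) solutions of Lf = r f normalized by Wronskian 1, with u_r(a+) = 0 and 𝒟_s u_r(a+) = k ∈ (0,∞). Then lim_{x→a+} u_r(x)·𝒟_s v_r(x) = 0, and consequently 𝒟_s u_r(a+) = 1/v_r(a+). -/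
open MeasureTheory Real Filter Topology

/-- at an accessible boundary `a`, with `u_r(a+) = 0`,
`𝒟_s u_r(a+) = k ∈ (0,∞)` and `v_r(a+) ∈ (0,∞)`, one has
`lim_{x→a+} u_r(x) 𝒟_s v_r(x) = 0` and consequently `𝒟_s u_r(a+) = 1/v_r(a+)`. -/
theorem boundary_limit_accessible
    (a b : EReal) (hab : a < b)
    (I : Set ℝ) (hI : I = {x : ℝ | a < (x : EReal) ∧ (x : EReal) < b})
    -- the filter of approach to `a` from the right within the interval
    (F : Filter ℝ) (hF : F = Filter.comap (fun x : ℝ => (x : EReal)) (𝓝[>] a))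
    (s m : ℝ → ℝ)
    (hs : StrictMonoOn s I) (hscont : ContinuousOn s I)
    (hm : StrictMonoOn m I) (hmcont : ContinuousOn m I)
    (μs μm : Measure ℝ)
    (hμs : ∀ x ∈ I, ∀ y ∈ I, x ≤ y → μs (Set.Ioc x y) = ENNReal.ofReal (s y - s x))
    (hμm : ∀ x ∈ I, ∀ y ∈ I, x ≤ y → μm (Set.Ioc x y) = ENNReal.ofReal (m y - m x))
    -- `a` is accessible: `s(a+)` is finite
    (sa : ℝ) (hsa : Tendsto s F (𝓝 sa))
    (r : ℝ) (hr : 0 < r)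
    (u v us vs : ℝ → ℝ)
    (hupos : ∀ x ∈ I, 0 < u x) (humono : StrictMonoOn u I)
    (hvpos : ∀ x ∈ I, 0 < v x) (hvmono : StrictAntiOn v I)
    (hu : ∀ x ∈ I, ∀ y ∈ I, u x - u y = ∫ z in y..x, us z ∂μs)
    (hv : ∀ x ∈ I, ∀ y ∈ I, v x - v y = ∫ z in y..x, vs z ∂μs)
    (hus : ∀ x ∈ I, ∀ y ∈ I, us x - us y = r * ∫ z in y..x, u z ∂μm)
    (hvs : ∀ x ∈ I, ∀ y ∈ I, vs x - vs y = r * ∫ z in y..x, v z ∂μm)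
    -- normalization: Wronskian identically one
    (hW : ∀ x ∈ I, v x * us x - u x * vs x = 1)
    -- `u_r(a+) = 0` and `𝒟_s u_r(a+) = k ∈ (0,∞)`
    (hua : Tendsto u F (𝓝 0))
    (k : ℝ) (hk : 0 < k) (husa : Tendsto us F (𝓝 k))
    -- `v_r(a+) ∈ (0,∞)`
    (va : ℝ) (hva : 0 < va) (hvaL : Tendsto v F (𝓝 va))
    -- `v_r(x)/u_r(x) = ∫_x^{b−} ds(y)/u_r(y)²`
    (hratio : ∀ x ∈ I, v x / u x = ∫ y in I ∩ Set.Ioi x, (1 / (u y) ^ 2) ∂μs) :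
    Tendsto (fun x => u x * vs x) F (𝓝 0) ∧ k = 1 / va := by
  -- membership in I
  have memI : ∀ x : ℝ, x ∈ I ↔ a < (x : EReal) ∧ (x : EReal) < b := by
    intro x; rw [hI]; rfl
  have hIcc : ∀ x ∈ I, ∀ y ∈ I, Set.Icc x y ⊆ I := by
    intro x hx y hy z hz
    rw [memI] at *
    exact ⟨lt_of_lt_of_le hx.1 (EReal.coe_le_coe_iff.mpr hz.1),
      lt_of_le_of_lt (EReal.coe_le_coe_iff.mpr hz.2) hy.2⟩
  -- basis for F
  have hbasis : F.HasBasis (fun t : EReal => a < t)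
      (fun t => (fun x : ℝ => (x : EReal)) ⁻¹' (Set.Ioo a t)) := by
    rw [hF]; exact (nhdsGT_basis_of_exists_gt ⟨b, hab⟩).comap _
  have hFne : F.NeBot := by
    rw [hbasis.neBot_iff]
    intro t ht
    obtain ⟨x, hx1, hx2⟩ := EReal.exists_between_coe_real ht
    exact ⟨x, hx1, hx2⟩
  have evct : ∀ t ∈ I, ∀ᶠ x in F, x ∈ I ∧ x < t := by
    intro t ht
    rw [hbasis.eventually_iff]
    refine ⟨(t : EReal), ((memI t).mp ht).1, ?_⟩
    rintro x ⟨hx1, hx2⟩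
    exact ⟨(memI x).mpr ⟨hx1, hx2.trans ((memI t).mp ht).2⟩, EReal.coe_lt_coe_iff.mp hx2⟩
  have exists_c : ∀ P : ℝ → Prop, (∀ᶠ x in F, P x) → ∃ c ∈ I, ∀ x ∈ I, x ≤ c → P x := by
    intro P hP
    rw [hbasis.eventually_iff] at hP
    obtain ⟨t, hat, ht⟩ := hP
    obtain ⟨c, hc1, hc2⟩ := EReal.exists_between_coe_real (lt_min hat hab)
    refine ⟨c, (memI c).mpr ⟨hc1, hc2.trans_le (min_le_right _ _)⟩, ?_⟩
    intro x hx hxc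
    exact ht ⟨((memI x).mp hx).1,
      lt_of_le_of_lt (EReal.coe_le_coe_iff.mpr hxc) (hc2.trans_le (min_le_left _ _))⟩
  -- monotonicity of us, vs
  have husmono : MonotoneOn us I := by
    intro x hx y hy hxy
    have h := hus y hy x hx
    rw [intervalIntegral.integral_of_le hxy] at h
    have hnn : 0 ≤ ∫ z in Set.Ioc x y, u z ∂μm := by
      refine setIntegral_nonneg measurableSet_Ioc fun z hz => ?_
      exact (hupos z (hIcc x hx y hy (Set.Ioc_subset_Icc_self hz))).le
    nlinarith
  have hvsmono : MonotoneOn vs I := by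
    intro x hx y hy hxy
    have h := hvs y hy x hx
    rw [intervalIntegral.integral_of_le hxy] at h
    have hnn : 0 ≤ ∫ z in Set.Ioc x y, v z ∂μm := by
      refine setIntegral_nonneg measurableSet_Ioc fun z hz => ?_
      exact (hvpos z (hIcc x hx y hy (Set.Ioc_subset_Icc_self hz))).le
    nlinarith
  -- μs facts
  have hμs_ne : ∀ x ∈ I, ∀ y ∈ I, x ≤ y → μs (Set.Ioc x y) ≠ ⊤ := by
    intro x hx y hy hxy; rw [hμs x hx y hy hxy]; exact ENNReal.ofReal_ne_top
  have hμs_toReal : ∀ x ∈ I, ∀ y ∈ I, x ≤ y → (μs (Set.Ioc x y)).toReal = s y - s x := by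
    intro x hx y hy hxy
    rw [hμs x hx y hy hxy, ENNReal.toReal_ofReal (sub_nonneg.mpr (hs.monotoneOn hx hy hxy))]
  -- integrability of monotone functions
  have hInt : ∀ f : ℝ → ℝ, MonotoneOn f I → ∀ x ∈ I, ∀ y ∈ I, x ≤ y →
      IntegrableOn f (Set.Ioc x y) μs := by
    intro f hf x hx y hy hxy
    set g : ℝ → ℝ := fun z => f (max x (min z y)) with hg
    have hmem : ∀ z : ℝ, max x (min z y) ∈ Set.Icc x y := by
      intro z
      exact ⟨le_max_left _ _, max_le hxy (min_le_right _ _)⟩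
    have hgmono : Monotone g := by
      intro z₁ z₂ h
      exact hf (hIcc x hx y hy (hmem z₁)) (hIcc x hx y hy (hmem z₂))
        (max_le_max le_rfl (min_le_min h le_rfl))
    have hgint : IntegrableOn g (Set.Ioc x y) μs := by
      refine Measure.integrableOn_of_bounded (hμs_ne x hx y hy hxy)
        hgmono.measurable.aestronglyMeasurable (M := max |f x| |f y|) (ae_of_all _ fun z => ?_)
      have h1 : f x ≤ g z := hf hx (hIcc x hx y hy (hmem z)) (hmem z).1
      have h2 : g z ≤ f y := hf (hIcc x hx y hy (hmem z)) hy (hmem z).2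
      exact abs_le_max_abs_abs h1 h2
    refine hgint.congr_fun (fun z hz => ?_) measurableSet_Ioc
    rw [hg]
    simp only [min_eq_left hz.2, max_eq_right hz.1.le]
  -- v ≤ va on I
  have hvle : ∀ x ∈ I, v x ≤ va := by
    intro x hx
    refine ge_of_tendsto hvaL ?_
    filter_upwards [evct x hx] with y hy
    exact (hvmono hy.1 hx hy.2).le
  -- sa < s x on I
  have hsa_le : ∀ x ∈ I, sa ≤ s x := by
    intro x hx
    refine le_of_tendsto hsa ?_
    filter_upwards [evct x hx] with y hy
    exact (hs hy.1 hx hy.2).le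
  have hsa_lt : ∀ x ∈ I, sa < s x := by
    intro x hx
    obtain ⟨y, hy⟩ := (evct x hx).exists
    exact lt_of_le_of_lt (hsa_le y hy.1) (hs hy.1 hx hy.2)
  -- fix c0 and the linear bound u z ≤ C (s z - sa)
  obtain ⟨c0, hc01, hc02⟩ := EReal.exists_between_coe_real hab
  have hc0I : c0 ∈ I := (memI c0).mpr ⟨hc01, hc02⟩
  set C : ℝ := max (us c0) 1 with hCdef
  have hC : 0 < C := lt_of_lt_of_le one_pos (le_max_right _ _)
  have hCu : ∀ z ∈ I, z ≤ c0 → u z ≤ C * (s z - sa) := by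
    intro z hz hzc0
    have htd : Tendsto (fun y => u y + C * (s z - s y)) F (𝓝 (0 + C * (s z - sa))) :=
      hua.add ((tendsto_const_nhds.sub hsa).const_mul C)
    rw [zero_add] at htd
    refine ge_of_tendsto htd ?_
    filter_upwards [evct z hz] with y hy
    obtain ⟨hyI, hyz⟩ := hy
    have h := hu z hz y hyI
    rw [intervalIntegral.integral_of_le hyz.le] at h
    have hb : ∫ w in Set.Ioc y z, us w ∂μs ≤ C * (s z - s y) := by
      have : ∫ w in Set.Ioc y z, us w ∂μs ≤ ∫ _ in Set.Ioc y z, C ∂μs := by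
        refine setIntegral_mono_on (hInt us husmono y hyI z hz hyz.le) ?_ measurableSet_Ioc ?_
        · exact integrableOn_const (hμs_ne y hyI z hz hyz.le)
        · intro w hw
          have hwI : w ∈ I := hIcc y hyI z hz (Set.Ioc_subset_Icc_self hw)
          exact le_trans (husmono hwI hc0I (hw.2.trans hzc0)) (le_max_left _ _)
      rwa [setIntegral_const, measureReal_def, hμs_toReal y hyI z hz hyz.le, smul_eq_mul, mul_comm] at this
    linarith
  -- vs < 0 on I
  have hvs_neg : ∀ x ∈ I, vs x < 0 := by
    intro x hx
    obtain ⟨y, hy1, hy2⟩ := EReal.exists_between_coe_real ((memI x).mp hx).2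
    have hyI : y ∈ I := (memI y).mpr ⟨lt_trans ((memI x).mp hx).1 hy1, hy2⟩
    have hxy : x < y := by exact_mod_cast hy1
    by_contra h
    push_neg at h
    have hnn : 0 ≤ ∫ z in Set.Ioc x y, vs z ∂μs := by
      refine setIntegral_nonneg measurableSet_Ioc fun z hz => ?_
      exact le_trans h (hvsmono hx (hIcc x hx y hyI (Set.Ioc_subset_Icc_self hz)) hz.1.le)
    have hd := hv y hyI x hx
    rw [intervalIntegral.integral_of_le hxy.le] at hd
    have := hvmono hx hyI hxy
    linarith
  -- the main limit
  have hL : Tendsto (fun x => u x * vs x) F (𝓝 (va * k - 1)) := by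
    have h1 : Tendsto (fun x => v x * us x - 1) F (𝓝 (va * k - 1)) :=
      (hvaL.mul husa).sub_const 1
    refine h1.congr' ?_
    filter_upwards [evct c0 hc0I] with x hx
    have := hW x hx.1
    linarith
  have hL0 : va * k - 1 ≤ 0 := by
    refine le_of_tendsto hL ?_
    filter_upwards [evct c0 hc0I] with x hx
    exact mul_nonpos_iff.mpr (Or.inl ⟨(hupos x hx.1).le, (hvs_neg x hx.1).le⟩)
  -- rule out va*k - 1 < 0
  have hLeq : va * k - 1 = 0 := by
    rcases hL0.lt_or_eq with hLlt | h
    · exfalso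
      set L : ℝ := va * k - 1 with hLdef
      have hev : ∀ᶠ x in F, u x * vs x < L / 2 ∧ (x ∈ I ∧ x < c0) :=
        (hL.eventually_lt_const (by linarith)).and (evct c0 hc0I)
      obtain ⟨c1, hc1I, hc1⟩ := exists_c _ hev
      have hc1c0 : c1 ≤ c0 := (hc1 c1 hc1I le_rfl).2.2.le
      set δ : ℝ := (-L) / (4 * C) with hδdef
      have hδ : 0 < δ := div_pos (by linarith) (by linarith)
      have step : ∀ t ∈ I, t ≤ c1 → ∃ t' ∈ I, t' ≤ c1 ∧ v t + δ ≤ v t' := by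
        intro t ht htc1
        set σ : ℝ := sa + (s t - sa) / 2 with hσdef
        have hst : sa < s t := hsa_lt t ht
        have hσ1 : sa < σ := by rw [hσdef]; linarith
        have hσ2 : σ < s t := by rw [hσdef]; linarith
        obtain ⟨y, ⟨hyI, hyt⟩, hyσ⟩ :=
          ((evct t ht).and (hsa.eventually_lt_const hσ1)).exists
        have hIyt : Set.Icc y t ⊆ I := hIcc y hyI t ht
        obtain ⟨t', ht'mem, ht's⟩ :=
          intermediate_value_Icc hyt.le (hscont.mono hIyt) ⟨hyσ.le, hσ2.le⟩
        have ht'I : t' ∈ I := hIyt ht'mem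
        have ht'lt : t' < t := by
          by_contra hle
          push_neg at hle
          have := hs.monotoneOn ht ht'I hle
          rw [ht's] at this
          linarith
        have hpos : 0 < s t - sa := by linarith
        have hden : 0 < C * (s t - sa) := mul_pos hC hpos
        have hβ : ∀ z ∈ Set.Ioc t' t, (-L / 2) / (C * (s t - sa)) ≤ -vs z := by
          intro z hz
          have hzI : z ∈ I := hIcc t' ht'I t ht (Set.Ioc_subset_Icc_self hz)
          have hzc1 : z ≤ c1 := hz.2.trans htc1
          have h1 : u z * vs z < L / 2 := (hc1 z hzI hzc1).1
          have h2 : u z ≤ C * (s t - sa) := by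
            refine le_trans (hCu z hzI (hzc1.trans hc1c0)) ?_
            have := hs.monotoneOn hzI ht hz.2
            nlinarith
          have hu0 : 0 < u z := hupos z hzI
          rw [div_le_iff₀ hden]
          have h3 : -L / 2 ≤ (-vs z) * u z := by nlinarith
          have h5 : (-vs z) * u z ≤ (-vs z) * (C * (s t - sa)) :=
            mul_le_mul_of_nonneg_left h2 (by linarith [hvs_neg z hzI])
          linarith
        have hd := hv t ht t' ht'I
        rw [intervalIntegral.integral_of_le ht'lt.le] at hd
        have hge : (-L / 2) / (C * (s t - sa)) * (μs (Set.Ioc t' t)).toReal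
            ≤ ∫ z in Set.Ioc t' t, (-vs z) ∂μs :=
          setIntegral_ge_of_const_le_real measurableSet_Ioc (hμs_ne t' ht'I t ht ht'lt.le) hβ
            ((hInt vs hvsmono t' ht'I t ht ht'lt.le).neg)
        rw [integral_neg, hμs_toReal t' ht'I t ht ht'lt.le] at hge
        have heq : (-L / 2) / (C * (s t - sa)) * (s t - s t') = δ := by
          rw [ht's, hσdef, hδdef]
          field_simp
          ring
        rw [heq] at hge
        exact ⟨t', ht'I, ht'lt.le.trans htc1, by linarith⟩
      have iter : ∀ n : ℕ, ∃ t ∈ I, t ≤ c1 ∧ v c1 + n * δ ≤ v t := by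
        intro n
        induction n with
        | zero => exact ⟨c1, hc1I, le_rfl, by simp⟩
        | succ n ih =>
          obtain ⟨t, htI, htc1, hvt⟩ := ih
          obtain ⟨t', ht'I, ht'c1, hvt'⟩ := step t htI htc1
          exact ⟨t', ht'I, ht'c1, by push_cast; linarith⟩
      obtain ⟨n, hn⟩ := exists_nat_gt ((va - v c1) / δ)
      obtain ⟨t, htI, htc1, hvt⟩ := iter n
      have h1 : v t ≤ va := hvle t htI
      have h2 : va - v c1 < n * δ := by
        rw [div_lt_iff₀ hδ] at hn; linarith
      linarith
    · exact h
  constructor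
  · exact hLeq ▸ hL
  · rw [eq_div_iff hva.ne']
    linarith
end

section
/- Let R_r^0 be the integral operator R_r^0 g(x) = ∫_a^{b−} R_r^0(x,y) g(y) dm(y) with symmetric kernel R_r^0(x,y) = u_r(x∧y) v_r(x∨y), where u_r, v_r are the normalized increasing/decreasing positive solutions of Lf = rf (Wronskian 1). Then for any bounded Borel g, f = R_r^0 g belongs to D(L) and satisfies L f = r f − g on (a,b). -/
open MeasureTheory Real Filter


lemma my_fubini_lt (ρ ν : Measure ℝ) [IsFiniteMeasure ρ] [IsFiniteMeasure ν]
    {φ ψ : ℝ → ℝ} (hφ : Integrable φ ρ) (hψ : Integrable ψ ν) :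
    ∫ z, φ z * ∫ w in Set.Ioi z, ψ w ∂ν ∂ρ
      = ∫ w, (∫ z in Set.Iio w, φ z ∂ρ) * ψ w ∂ν := by
  have hS : MeasurableSet {p : ℝ × ℝ | p.1 < p.2} :=
    (isOpen_lt continuous_fst continuous_snd).measurableSet
  set F : ℝ × ℝ → ℝ := {p : ℝ × ℝ | p.1 < p.2}.indicator (fun p => φ p.1 * ψ p.2) with hFdef
  have hF : Integrable F (ρ.prod ν) := (hφ.mul_prod hψ).indicator hS
  have h1 : ∀ z, φ z * ∫ w in Set.Ioi z, ψ w ∂ν = ∫ w, F (z, w) ∂ν := by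
    intro z
    rw [← integral_indicator measurableSet_Ioi, ← integral_const_mul]
    congr 1; ext w
    by_cases h : z < w <;> simp [hFdef, Set.indicator, h, Set.mem_Ioi]
  have h2 : ∀ w, (∫ z in Set.Iio w, φ z ∂ρ) * ψ w = ∫ z, F (z, w) ∂ρ := by
    intro w
    rw [← integral_indicator measurableSet_Iio, ← integral_mul_const]
    congr 1; ext z
    by_cases h : z < w <;> simp [hFdef, Set.indicator, h, Set.mem_Iio]
  simp_rw [h1, h2]
  exact integral_integral_swap hF

lemma my_fubini_le (ρ ν : Measure ℝ) [IsFiniteMeasure ρ] [IsFiniteMeasure ν]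
    {φ ψ : ℝ → ℝ} (hφ : Integrable φ ρ) (hψ : Integrable ψ ν) :
    ∫ z, φ z * ∫ w in Set.Iic z, ψ w ∂ν ∂ρ
      = ∫ w, (∫ z in Set.Ici w, φ z ∂ρ) * ψ w ∂ν := by
  have hS : MeasurableSet {p : ℝ × ℝ | p.2 ≤ p.1} :=
    (isClosed_le continuous_snd continuous_fst).measurableSet
  set F : ℝ × ℝ → ℝ := {p : ℝ × ℝ | p.2 ≤ p.1}.indicator (fun p => φ p.1 * ψ p.2) with hFdef
  have hF : Integrable F (ρ.prod ν) := (hφ.mul_prod hψ).indicator hS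
  have h1 : ∀ z, φ z * ∫ w in Set.Iic z, ψ w ∂ν = ∫ w, F (z, w) ∂ν := by
    intro z
    rw [← integral_indicator measurableSet_Iic, ← integral_const_mul]
    congr 1; ext w
    by_cases h : w ≤ z <;> simp [hFdef, Set.indicator, h, Set.mem_Iic]
  have h2 : ∀ w, (∫ z in Set.Ici w, φ z ∂ρ) * ψ w = ∫ z, F (z, w) ∂ρ := by
    intro w
    rw [← integral_indicator measurableSet_Ici, ← integral_mul_const]
    congr 1; ext z
    by_cases h : w ≤ z <;> simp [hFdef, Set.indicator, h, Set.mem_Ici]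
  simp_rw [h1, h2]
  exact integral_integral_swap hF

lemma my_ae_eq_Ioo_Ioc {μ : Measure ℝ} {p q : ℝ} (h : μ {q} = 0) :
    (Set.Ioo p q : Set ℝ) =ᵐ[μ] Set.Ioc p q := by
  refine (MeasureTheory.ae_eq_set).2 ⟨?_, ?_⟩
  · rw [Set.diff_eq_empty.2 Set.Ioo_subset_Ioc_self]; exact measure_empty
  · refine measure_mono_null (fun x hx => ?_) h
    have h1 : x ≤ q := hx.1.2
    have h2 : ¬ (p < x ∧ x < q) := hx.2
    have : ¬ x < q := fun hlt => h2 ⟨hx.1.1, hlt⟩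
    simpa using le_antisymm h1 (not_lt.1 this)

lemma my_ae_eq_Icc_Ioc {μ : Measure ℝ} {p q : ℝ} (hpq : p ≤ q) (h : μ {p} = 0) :
    (Set.Icc p q : Set ℝ) =ᵐ[μ] Set.Ioc p q := by
  refine (MeasureTheory.ae_eq_set).2 ⟨?_, ?_⟩
  · refine measure_mono_null (fun x hx => ?_) h
    have h2 : ¬ (p < x ∧ x ≤ q) := hx.2
    have : ¬ p < x := fun hlt => h2 ⟨hlt, hx.1.2⟩
    simpa using le_antisymm (not_lt.1 this) hx.1.1
  · rw [Set.diff_eq_empty.2 Set.Ioc_subset_Icc_self]; exact measure_empty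

lemma my_abs_le_max {p z q : ℝ} (h1 : p ≤ z) (h2 : z ≤ q) : |z| ≤ max |p| |q| := by
  rcases le_total 0 z with h | h
  · exact le_trans (by rw [abs_of_nonneg h]; exact le_trans h2 (le_abs_self q)) (le_max_right _ _)
  · refine le_trans ?_ (le_max_left _ _)
    rw [abs_of_nonpos h]
    exact le_trans (by linarith [neg_abs_le p]) (le_refl |p|)


/-- for the resolvent kernel operator
`R_r^0 g(x) = ∫_a^{b−} u_r(x∧y) v_r(x∨y) g(y) dm(y)` built from the normalized
positive increasing/decreasing solutions `u_r, v_r` of `Lφ = rφ` (Wronskian `≡ 1`),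
and any bounded Borel `g`, the function `f = R_r^0 g` belongs to `D(L)` and
satisfies `L f = r f − g` on `(a,b)`. -/
theorem resolvent_kernel_solves_ode
    (a b : EReal) (hab : a < b)
    (I : Set ℝ) (hI : I = {x : ℝ | a < (x : EReal) ∧ (x : EReal) < b})
    (s m : ℝ → ℝ)
    (hs : StrictMonoOn s I) (hscont : ContinuousOn s I)
    (hm : StrictMonoOn m I) (hmcont : ContinuousOn m I)
    (μs μm : Measure ℝ)
    (hμs : ∀ x ∈ I, ∀ y ∈ I, x ≤ y → μs (Set.Ioc x y) = ENNReal.ofReal (s y - s x))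
    (hμm : ∀ x ∈ I, ∀ y ∈ I, x ≤ y → μm (Set.Ioc x y) = ENNReal.ofReal (m y - m x))
    (r : ℝ) (hr : 0 < r)
    (u v us vs : ℝ → ℝ)
    (hupos : ∀ x ∈ I, 0 < u x) (humono : StrictMonoOn u I)
    (hvpos : ∀ x ∈ I, 0 < v x) (hvmono : StrictAntiOn v I)
    (hu : ∀ x ∈ I, ∀ y ∈ I, u x - u y = ∫ z in y..x, us z ∂μs)
    (hv : ∀ x ∈ I, ∀ y ∈ I, v x - v y = ∫ z in y..x, vs z ∂μs)
    (hus : ∀ x ∈ I, ∀ y ∈ I, us x - us y = r * ∫ z in y..x, u z ∂μm)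
    (hvs : ∀ x ∈ I, ∀ y ∈ I, vs x - vs y = r * ∫ z in y..x, v z ∂μm)
    -- normalization: Wronskian identically one
    (hW : ∀ x ∈ I, v x * us x - u x * vs x = 1)
    -- integrability of `u_r` near `a` and of `v_r` near `b`
    (c : ℝ) (hc : c ∈ I)
    (huintm : IntegrableOn u (I ∩ Set.Iio c) μm)
    (hvintm : IntegrableOn v (I ∩ Set.Ioi c) μm)
    -- `g` bounded Borel
    (g : ℝ → ℝ) (hgmeas : Measurable g) (C : ℝ) (hgbdd : ∀ x, |g x| ≤ C)
    -- `f = R_r^0 g`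
    (f : ℝ → ℝ)
    (hf : ∀ x ∈ I, f x = ∫ y in I, u (min x y) * v (max x y) * g y ∂μm) :
    ∃ fs : ℝ → ℝ,
      (∀ x ∈ I, ∀ y ∈ I, f x - f y = ∫ z in y..x, fs z ∂μs) ∧
      (∀ x ∈ I, ∀ y ∈ I, fs x - fs y = ∫ z in y..x, (r * f z - g z) ∂μm) := by
  classical
  -- ## basic facts about I
  have hmemI : ∀ {x : ℝ}, x ∈ I ↔ a < (x : EReal) ∧ (x : EReal) < b := by
    intro x; rw [hI]; exact Iff.rfl
  have hsub : ∀ {p q : ℝ}, p ∈ I → q ∈ I → Set.Icc p q ⊆ I := by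
    intro p q hp hq z hz
    rw [hmemI] at hp hq ⊢
    exact ⟨lt_of_lt_of_le hp.1 (EReal.coe_le_coe_iff.2 hz.1),
           lt_of_le_of_lt (EReal.coe_le_coe_iff.2 hz.2) hq.2⟩
  have hIocsub : ∀ {p q : ℝ}, p ∈ I → q ∈ I → Set.Ioc p q ⊆ I :=
    fun hp hq => (Set.Ioc_subset_Icc_self).trans (hsub hp hq)
  have hIopen : IsOpen I := by
    rw [hI]
    exact (isOpen_Ioo (a := a) (b := b)).preimage continuous_coe_real_ereal
  have hImeas : MeasurableSet I := hIopen.measurableSet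
  have hbelow : ∀ p ∈ I, ∃ q ∈ I, q < p := by
    intro p hp
    obtain ⟨ε, hε, hball⟩ := Metric.isOpen_iff.1 hIopen p hp
    refine ⟨p - ε/2, hball ?_, by linarith⟩
    rw [Metric.mem_ball, Real.dist_eq, show p - ε/2 - p = -(ε/2) by ring, abs_neg,
      abs_of_pos (by linarith)]
    linarith
  -- ## atoms
  have hatom : ∀ (μ : Measure ℝ) (F : ℝ → ℝ),
      (∀ x ∈ I, ∀ y ∈ I, x ≤ y → μ (Set.Ioc x y) = ENNReal.ofReal (F y - F x)) →
      ContinuousOn F I → ∀ p ∈ I, μ {p} = 0 := by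
    intro μ F hμ hF p hp
    refine le_antisymm ?_ (by simp)
    refine ENNReal.le_of_forall_pos_le_add (fun ε hε _ => ?_)
    rw [zero_add]
    have hcont : ContinuousAt F p := hF.continuousAt (hIopen.mem_nhds hp)
    have hev : F ⁻¹' Set.Ioi (F p - (ε : ℝ)) ∈ nhds p :=
      hcont.preimage_mem_nhds (Ioi_mem_nhds (by simpa using hε))
    have hmem : (F ⁻¹' Set.Ioi (F p - (ε : ℝ)) ∩ I) ∩ Set.Iio p ∈ nhdsWithin p (Set.Iio p) :=
      Filter.inter_mem (mem_nhdsWithin_of_mem_nhds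
        (Filter.inter_mem hev (hIopen.mem_nhds hp))) self_mem_nhdsWithin
    obtain ⟨q, ⟨hqF, hqI⟩, hqp⟩ := Filter.nonempty_of_mem hmem
    have h1 : μ {p} ≤ μ (Set.Ioc q p) := measure_mono (fun z hz => by
      simp only [Set.mem_singleton_iff] at hz
      subst hz; exact ⟨hqp, le_refl _⟩)
    rw [hμ q hqI p hp (le_of_lt hqp)] at h1
    refine le_trans h1 ?_
    have h2 : F p - (ε : ℝ) < F q := hqF
    rw [← ENNReal.ofReal_coe_nnreal]
    exact ENNReal.ofReal_le_ofReal (by linarith)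
  have hams : ∀ p ∈ I, μs {p} = 0 := hatom μs s hμs hscont
  have hamm : ∀ p ∈ I, μm {p} = 0 := hatom μm m hμm hmcont
  -- ## finiteness
  have hfins : ∀ {p q : ℝ}, p ∈ I → q ∈ I → μs (Set.Ioc p q) < ⊤ := by
    intro p q hp hq
    rcases le_total p q with h | h
    · rw [hμs p hp q hq h]; exact ENNReal.ofReal_lt_top
    · rw [Set.Ioc_eq_empty (not_lt.2 h)]; simp
  have hfinm : ∀ {p q : ℝ}, p ∈ I → q ∈ I → μm (Set.Ioc p q) < ⊤ := by
    intro p q hp hq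
    rcases le_total p q with h | h
    · rw [hμm p hp q hq h]; exact ENNReal.ofReal_lt_top
    · rw [Set.Ioc_eq_empty (not_lt.2 h)]; simp
  -- ## measurability helpers
  have hrsub : ∀ (μ : Measure ℝ) {S : Set ℝ}, MeasurableSet S → S ⊆ I →
      ∀ {F : ℝ → ℝ}, AEMeasurable F (μ.restrict I) → AEMeasurable F (μ.restrict S) := by
    intro μ S hS hSI F hF
    have h : μ.restrict S = (μ.restrict I).restrict S := by
      rw [Measure.restrict_restrict hS, Set.inter_eq_self_of_subset_left hSI]
    rw [h]
    exact hF.restrict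
  have haemu : ∀ (μ : Measure ℝ) {S : Set ℝ}, MeasurableSet S → S ⊆ I →
      AEMeasurable u (μ.restrict S) :=
    fun μ S hS hSI => hrsub μ hS hSI
      (aemeasurable_restrict_of_monotoneOn hImeas humono.monotoneOn)
  have haemv : ∀ (μ : Measure ℝ) {S : Set ℝ}, MeasurableSet S → S ⊆ I →
      AEMeasurable v (μ.restrict S) :=
    fun μ S hS hSI => hrsub μ hS hSI
      (aemeasurable_restrict_of_antitoneOn hImeas hvmono.antitoneOn)
  have husmono : MonotoneOn us I := by
    intro p hp q hq hpq
    have h1 := hus q hq p hp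
    rw [intervalIntegral.integral_of_le hpq] at h1
    have h2 : 0 ≤ ∫ z in Set.Ioc p q, u z ∂μm :=
      setIntegral_nonneg measurableSet_Ioc (fun z hz => (hupos z (hIocsub hp hq hz)).le)
    nlinarith
  have hvsmono : MonotoneOn vs I := by
    intro p hp q hq hpq
    have h1 := hvs q hq p hp
    rw [intervalIntegral.integral_of_le hpq] at h1
    have h2 : 0 ≤ ∫ z in Set.Ioc p q, v z ∂μm :=
      setIntegral_nonneg measurableSet_Ioc (fun z hz => (hvpos z (hIocsub hp hq hz)).le)
    nlinarith
  have haemus : ∀ (μ : Measure ℝ) {S : Set ℝ}, MeasurableSet S → S ⊆ I →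
      AEMeasurable us (μ.restrict S) :=
    fun μ S hS hSI => hrsub μ hS hSI
      (aemeasurable_restrict_of_monotoneOn hImeas husmono)
  have haemvs : ∀ (μ : Measure ℝ) {S : Set ℝ}, MeasurableSet S → S ⊆ I →
      AEMeasurable vs (μ.restrict S) :=
    fun μ S hS hSI => hrsub μ hS hSI
      (aemeasurable_restrict_of_monotoneOn hImeas hvsmono)
  -- ## bounded measurable implies integrable on finite pieces
  have hbddint : ∀ (μ : Measure ℝ) {S : Set ℝ}, MeasurableSet S → μ S < ⊤ →
      ∀ {F : ℝ → ℝ}, AEMeasurable F (μ.restrict S) → ∀ {M : ℝ}, (∀ z ∈ S, |F z| ≤ M) →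
      IntegrableOn F S μ := by
    intro μ S hS hfin F hF M hM
    refine Integrable.mono' ((integrableOn_const_iff (C := M)).2 (Or.inr hfin)) hF.aestronglyMeasurable ?_
    exact (ae_restrict_iff' hS).2 (Eventually.of_forall (fun z hz => by
      simpa using hM z hz))
  have hC0 : 0 ≤ C := le_trans (abs_nonneg _) (hgbdd 0)
  -- ## integrability of u near a, v near b
  have hintu : ∀ x ∈ I, IntegrableOn u (I ∩ Set.Iic x) μm := by
    intro x hx
    have hcover : I ∩ Set.Iic x ⊆ (I ∩ Set.Iio c) ∪ (I ∩ Set.Icc c x) := by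
      rintro w ⟨hwI, hwx⟩
      rcases lt_or_ge w c with h | h
      · exact Or.inl ⟨hwI, h⟩
      · exact Or.inr ⟨hwI, h, hwx⟩
    refine IntegrableOn.mono_set ?_ hcover
    refine huintm.union ?_
    rcases lt_or_ge x c with hxc | hcx
    · rw [Set.Icc_eq_empty (not_le.2 hxc), Set.inter_empty]; exact integrableOn_empty
    · obtain ⟨q, hqI, hqc⟩ := hbelow c hc
      have hfin : μm (I ∩ Set.Icc c x) < ⊤ := by
        refine lt_of_le_of_lt (measure_mono (fun z hz => ?_)) (hfinm hqI hx)
        exact ⟨lt_of_lt_of_le hqc hz.2.1, hz.2.2⟩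
      refine hbddint μm (hImeas.inter measurableSet_Icc) hfin
        (haemu μm (hImeas.inter measurableSet_Icc) Set.inter_subset_left) (M := u x) ?_
      intro z hz
      rw [abs_of_pos (hupos z hz.1)]
      exact humono.monotoneOn hz.1 hx hz.2.2
  have hintv : ∀ x ∈ I, IntegrableOn v (I ∩ Set.Ioi x) μm := by
    intro x hx
    have hcover : I ∩ Set.Ioi x ⊆ (I ∩ Set.Ioi c) ∪ (I ∩ Set.Ioc x c) := by
      rintro w ⟨hwI, hwx⟩
      rcases lt_or_ge c w with h | h
      · exact Or.inl ⟨hwI, h⟩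
      · exact Or.inr ⟨hwI, hwx, h⟩
    refine IntegrableOn.mono_set ?_ hcover
    refine hvintm.union ?_
    have hfin : μm (I ∩ Set.Ioc x c) < ⊤ :=
      lt_of_le_of_lt (measure_mono Set.inter_subset_right) (hfinm hx hc)
    refine hbddint μm (hImeas.inter measurableSet_Ioc) hfin
      (haemv μm (hImeas.inter measurableSet_Ioc) Set.inter_subset_left) (M := v x) ?_
    intro z hz
    rw [abs_of_pos (hvpos z hz.1)]
    exact (hvmono.antitoneOn hx hz.1 hz.2.1.le)
  -- ## products u*h, v*h integrable
  have hinthu : ∀ (h : ℝ → ℝ), Measurable h → (∀ w, |h w| ≤ C) →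
      ∀ x ∈ I, IntegrableOn (fun w => u w * h w) (I ∩ Set.Iic x) μm := by
    intro h hh hhb x hx
    have hi := hintu x hx
    refine Integrable.mono' (hi.norm.const_mul C)
      ((haemu μm (hImeas.inter measurableSet_Iic) Set.inter_subset_left).mul
        hh.aemeasurable).aestronglyMeasurable ?_
    refine Eventually.of_forall (fun w => ?_)
    rw [Real.norm_eq_abs, abs_mul]
    calc |u w| * |h w| ≤ |u w| * C := mul_le_mul_of_nonneg_left (hhb w) (abs_nonneg _)
      _ = C * ‖u w‖ := by rw [Real.norm_eq_abs]; ring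
  have hinthv : ∀ (h : ℝ → ℝ), Measurable h → (∀ w, |h w| ≤ C) →
      ∀ x ∈ I, IntegrableOn (fun w => v w * h w) (I ∩ Set.Ioi x) μm := by
    intro h hh hhb x hx
    have hi := hintv x hx
    refine Integrable.mono' (hi.norm.const_mul C)
      ((haemv μm (hImeas.inter measurableSet_Ioi) Set.inter_subset_left).mul
        hh.aemeasurable).aestronglyMeasurable ?_
    refine Eventually.of_forall (fun w => ?_)
    rw [Real.norm_eq_abs, abs_mul]
    calc |v w| * |h w| ≤ |v w| * C := mul_le_mul_of_nonneg_left (hhb w) (abs_nonneg _)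
      _ = C * ‖v w‖ := by rw [Real.norm_eq_abs]; ring
  -- ## difference formulas for the partial integrals
  have hPdiffgen : ∀ (h : ℝ → ℝ), Measurable h → (∀ w, |h w| ≤ C) →
      ∀ x ∈ I, ∀ y ∈ I, y ≤ x →
      (∫ w in I ∩ Set.Iic x, u w * h w ∂μm)
        = (∫ w in I ∩ Set.Iic y, u w * h w ∂μm) + ∫ w in Set.Ioc y x, u w * h w ∂μm := by
    intro h hh hhb x hx y hy hyx
    have hsp : I ∩ Set.Iic x = (I ∩ Set.Iic y) ∪ Set.Ioc y x := by
      ext w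
      constructor
      · rintro ⟨hwI, hwx⟩
        rcases le_or_gt w y with h' | h'
        · exact Or.inl ⟨hwI, h'⟩
        · exact Or.inr ⟨h', hwx⟩
      · rintro (⟨hwI, hwy⟩ | hw)
        · exact ⟨hwI, le_trans hwy hyx⟩
        · exact ⟨hIocsub hy hx hw, hw.2⟩
    have hdisj : Disjoint (I ∩ Set.Iic y) (Set.Ioc y x) := by
      refine Set.disjoint_left.2 ?_
      rintro w ⟨_, hwy⟩ hw
      exact absurd hwy (not_le.2 hw.1)
    rw [hsp, setIntegral_union hdisj measurableSet_Ioc (hinthu h hh hhb y hy)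
      ((hinthu h hh hhb x hx).mono_set (fun w hw => ⟨hIocsub hy hx hw, hw.2⟩))]
  have hQdiffgen : ∀ (h : ℝ → ℝ), Measurable h → (∀ w, |h w| ≤ C) →
      ∀ x ∈ I, ∀ y ∈ I, y ≤ x →
      (∫ w in I ∩ Set.Ioi y, v w * h w ∂μm)
        = (∫ w in I ∩ Set.Ioi x, v w * h w ∂μm) + ∫ w in Set.Ioc y x, v w * h w ∂μm := by
    intro h hh hhb x hx y hy hyx
    have hsp : I ∩ Set.Ioi y = (I ∩ Set.Ioi x) ∪ Set.Ioc y x := by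
      ext w
      constructor
      · rintro ⟨hwI, hwy⟩
        rcases le_or_gt w x with h' | h'
        · exact Or.inr ⟨hwy, h'⟩
        · exact Or.inl ⟨hwI, h'⟩
      · rintro (⟨hwI, hwx⟩ | hw)
        · exact ⟨hwI, lt_of_le_of_lt hyx hwx⟩
        · exact ⟨hIocsub hy hx hw, hw.1⟩
    have hdisj : Disjoint (I ∩ Set.Ioi x) (Set.Ioc y x) := by
      refine Set.disjoint_left.2 ?_
      rintro w ⟨_, hwx⟩ hw
      exact absurd hw.2 (not_le.2 hwx)
    rw [hsp, setIntegral_union hdisj measurableSet_Ioc (hinthv h hh hhb x hx)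
      ((hinthv h hh hhb y hy).mono_set (fun w hw => ⟨hIocsub hy hx hw, hw.1⟩))]
  -- ## the partial integrals P and Q
  obtain ⟨P, hP⟩ : ∃ P : ℝ → ℝ, ∀ z, P z = ∫ w in I ∩ Set.Iic z, u w * g w ∂μm :=
    ⟨_, fun z => rfl⟩
  obtain ⟨Q, hQ⟩ : ∃ Q : ℝ → ℝ, ∀ z, Q z = ∫ w in I ∩ Set.Ioi z, v w * g w ∂μm :=
    ⟨_, fun z => rfl⟩
  have hPdiff : ∀ x ∈ I, ∀ y ∈ I, y ≤ x →
      P x = P y + ∫ w in Set.Ioc y x, u w * g w ∂μm := by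
    intro x hx y hy hyx
    rw [hP, hP]
    exact hPdiffgen g hgmeas hgbdd x hx y hy hyx
  have hQdiff : ∀ x ∈ I, ∀ y ∈ I, y ≤ x →
      Q y = Q x + ∫ w in Set.Ioc y x, v w * g w ∂μm := by
    intro x hx y hy hyx
    rw [hQ, hQ]
    exact hQdiffgen g hgmeas hgbdd x hx y hy hyx
  -- ## f in terms of P and Q
  have hfPQ : ∀ x ∈ I, f x = v x * P x + u x * Q x := by
    intro x hx
    have hsplit : I = (I ∩ Set.Iic x) ∪ (I ∩ Set.Ioi x) := by
      rw [← Set.inter_union_distrib_left, Set.Iic_union_Ioi, Set.inter_univ]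
    have hdisj : Disjoint (I ∩ Set.Iic x) (I ∩ Set.Ioi x) := by
      refine Set.disjoint_left.2 ?_
      rintro w ⟨_, hw1⟩ ⟨_, hw2⟩
      exact absurd (show w ≤ x from hw1) (not_le.2 hw2)
    have e1 : Set.EqOn (fun w => u (min x w) * v (max x w) * g w)
        (fun w => v x * (u w * g w)) (I ∩ Set.Iic x) := by
      intro w hw
      simp only
      rw [min_eq_right hw.2, max_eq_left hw.2]
      ring
    have e2 : Set.EqOn (fun w => u (min x w) * v (max x w) * g w)
        (fun w => u x * (v w * g w)) (I ∩ Set.Ioi x) := by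
      intro w hw
      simp only
      rw [min_eq_left (le_of_lt hw.2), max_eq_right (le_of_lt hw.2)]
      ring
    have i1 : IntegrableOn (fun w => u (min x w) * v (max x w) * g w) (I ∩ Set.Iic x) μm := by
      refine IntegrableOn.congr_fun ?_ e1.symm (hImeas.inter measurableSet_Iic)
      exact ((hinthu g hgmeas hgbdd x hx)).const_mul (v x)
    have i2 : IntegrableOn (fun w => u (min x w) * v (max x w) * g w) (I ∩ Set.Ioi x) μm := by
      refine IntegrableOn.congr_fun ?_ e2.symm (hImeas.inter measurableSet_Ioi)
      exact ((hinthv g hgmeas hgbdd x hx)).const_mul (u x)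
    calc f x = ∫ w in I, u (min x w) * v (max x w) * g w ∂μm := hf x hx
      _ = ∫ w in (I ∩ Set.Iic x) ∪ (I ∩ Set.Ioi x), u (min x w) * v (max x w) * g w ∂μm := by
          rw [← hsplit]
      _ = (∫ w in I ∩ Set.Iic x, u (min x w) * v (max x w) * g w ∂μm)
          + ∫ w in I ∩ Set.Ioi x, u (min x w) * v (max x w) * g w ∂μm :=
          setIntegral_union hdisj (hImeas.inter measurableSet_Ioi) i1 i2
      _ = (∫ w in I ∩ Set.Iic x, v x * (u w * g w) ∂μm)
          + ∫ w in I ∩ Set.Ioi x, u x * (v w * g w) ∂μm := by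
          rw [setIntegral_congr_fun (hImeas.inter measurableSet_Iic) e1,
              setIntegral_congr_fun (hImeas.inter measurableSet_Ioi) e2]
      _ = v x * P x + u x * Q x := by
          rw [integral_const_mul, integral_const_mul, hP, hQ]
  -- ## measurability of P and Q
  have hgpos : Measurable (fun w => max (g w) 0) := hgmeas.max measurable_const
  have hgneg : Measurable (fun w => max (-g w) 0) := hgmeas.neg.max measurable_const
  have hgposb : ∀ w, |max (g w) 0| ≤ C := by
    intro w
    rw [abs_of_nonneg (le_max_right _ _)]
    exact max_le (le_trans (le_abs_self _) (hgbdd w)) hC0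
  have hgnegb : ∀ w, |max (-g w) 0| ≤ C := by
    intro w
    rw [abs_of_nonneg (le_max_right _ _)]
    exact max_le (le_trans (le_abs_self _) (by rw [abs_neg]; exact hgbdd w)) hC0
  have hgdec : ∀ w, g w = max (g w) 0 - max (-g w) 0 :=
    fun w => (max_zero_sub_max_neg_zero_eq_self (g w)).symm
  have hPaem : ∀ (μ : Measure ℝ) {S : Set ℝ}, MeasurableSet S → S ⊆ I →
      AEMeasurable P (μ.restrict S) := by
    intro μ S hS hSI
    refine hrsub μ hS hSI ?_
    have hmono1 : MonotoneOn (fun z => ∫ w in I ∩ Set.Iic z, u w * max (g w) 0 ∂μm) I := by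
      intro p hp q hq hpq
      have h1 := hPdiffgen _ hgpos hgposb q hq p hp hpq
      have h2 : 0 ≤ ∫ w in Set.Ioc p q, u w * max (g w) 0 ∂μm :=
        setIntegral_nonneg measurableSet_Ioc
          (fun w hw => mul_nonneg (hupos w (hIocsub hp hq hw)).le (le_max_right _ _))
      simp only at h1 ⊢
      linarith
    have hmono2 : MonotoneOn (fun z => ∫ w in I ∩ Set.Iic z, u w * max (-g w) 0 ∂μm) I := by
      intro p hp q hq hpq
      have h1 := hPdiffgen _ hgneg hgnegb q hq p hp hpq
      have h2 : 0 ≤ ∫ w in Set.Ioc p q, u w * max (-g w) 0 ∂μm :=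
        setIntegral_nonneg measurableSet_Ioc
          (fun w hw => mul_nonneg (hupos w (hIocsub hp hq hw)).le (le_max_right _ _))
      simp only at h1 ⊢
      linarith
    refine AEMeasurable.congr
      ((aemeasurable_restrict_of_monotoneOn hImeas hmono1).sub
        (aemeasurable_restrict_of_monotoneOn hImeas hmono2)) ?_
    refine (ae_restrict_mem hImeas).mono (fun z hz => ?_)
    simp only [Pi.sub_apply]
    rw [hP]
    have e0 : Set.EqOn (fun w => u w * g w)
        (fun w => u w * max (g w) 0 - u w * max (-g w) 0) (I ∩ Set.Iic z) := by
      intro w _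
      simp only
      rw [← mul_sub, ← hgdec w]
    rw [setIntegral_congr_fun (hImeas.inter measurableSet_Iic) e0,
      integral_sub (hinthu _ hgpos hgposb z hz) (hinthu _ hgneg hgnegb z hz)]
  have hQaem : ∀ (μ : Measure ℝ) {S : Set ℝ}, MeasurableSet S → S ⊆ I →
      AEMeasurable Q (μ.restrict S) := by
    intro μ S hS hSI
    refine hrsub μ hS hSI ?_
    have hmono1 : AntitoneOn (fun z => ∫ w in I ∩ Set.Ioi z, v w * max (g w) 0 ∂μm) I := by
      intro p hp q hq hpq
      have h1 := hQdiffgen _ hgpos hgposb q hq p hp hpq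
      have h2 : 0 ≤ ∫ w in Set.Ioc p q, v w * max (g w) 0 ∂μm :=
        setIntegral_nonneg measurableSet_Ioc
          (fun w hw => mul_nonneg (hvpos w (hIocsub hp hq hw)).le (le_max_right _ _))
      simp only at h1 ⊢
      linarith
    have hmono2 : AntitoneOn (fun z => ∫ w in I ∩ Set.Ioi z, v w * max (-g w) 0 ∂μm) I := by
      intro p hp q hq hpq
      have h1 := hQdiffgen _ hgneg hgnegb q hq p hp hpq
      have h2 : 0 ≤ ∫ w in Set.Ioc p q, v w * max (-g w) 0 ∂μm :=
        setIntegral_nonneg measurableSet_Ioc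
          (fun w hw => mul_nonneg (hvpos w (hIocsub hp hq hw)).le (le_max_right _ _))
      simp only at h1 ⊢
      linarith
    refine AEMeasurable.congr
      ((aemeasurable_restrict_of_antitoneOn hImeas hmono1).sub
        (aemeasurable_restrict_of_antitoneOn hImeas hmono2)) ?_
    refine (ae_restrict_mem hImeas).mono (fun z hz => ?_)
    simp only [Pi.sub_apply]
    rw [hQ]
    have e0 : Set.EqOn (fun w => v w * g w)
        (fun w => v w * max (g w) 0 - v w * max (-g w) 0) (I ∩ Set.Ioi z) := by
      intro w _
      simp only
      rw [← mul_sub, ← hgdec w]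
    rw [setIntegral_congr_fun (hImeas.inter measurableSet_Ioi) e0,
      integral_sub (hinthv _ hgpos hgposb z hz) (hinthv _ hgneg hgnegb z hz)]
  -- ## bounds for P and Q
  have hPbd : ∀ x ∈ I, ∀ z ∈ I, z ≤ x →
      |P z| ≤ ∫ w in I ∩ Set.Iic x, ‖u w * g w‖ ∂μm := by
    intro x hx z hz hzx
    rw [hP, ← Real.norm_eq_abs]
    refine le_trans (norm_integral_le_integral_norm _) ?_
    refine setIntegral_mono_set ((hinthu g hgmeas hgbdd x hx)).norm
      (Eventually.of_forall (fun w => norm_nonneg _)) ?_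
    exact HasSubset.Subset.eventuallyLE
      (Set.inter_subset_inter_right I (Set.Iic_subset_Iic.2 hzx))
  have hQbd : ∀ y ∈ I, ∀ z ∈ I, y ≤ z →
      |Q z| ≤ ∫ w in I ∩ Set.Ioi y, ‖v w * g w‖ ∂μm := by
    intro y hy z hz hyz
    rw [hQ, ← Real.norm_eq_abs]
    refine le_trans (norm_integral_le_integral_norm _) ?_
    refine setIntegral_mono_set ((hinthv g hgmeas hgbdd y hy)).norm
      (Eventually.of_forall (fun w => norm_nonneg _)) ?_
    exact HasSubset.Subset.eventuallyLE
      (Set.inter_subset_inter_right I (Set.Ioi_subset_Ioi hyz))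
  -- ## key identity 1
  have key1 : ∀ x ∈ I, ∀ y ∈ I, y ≤ x →
      f x - f y = ∫ z in Set.Ioc y x, (vs z * P z + us z * Q z) ∂μs := by
    intro x hx y hy hyx
    have hSI : Set.Ioc y x ⊆ I := hIocsub hy hx
    have hSm : MeasurableSet (Set.Ioc y x) := measurableSet_Ioc
    haveI hfin1 : IsFiniteMeasure (μs.restrict (Set.Ioc y x)) :=
      ⟨by rw [Measure.restrict_apply_univ]; exact hfins hy hx⟩
    haveI hfin2 : IsFiniteMeasure (μm.restrict (Set.Ioc y x)) :=
      ⟨by rw [Measure.restrict_apply_univ]; exact hfinm hy hx⟩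
    have hvsb : ∀ z ∈ Set.Ioc y x, |vs z| ≤ max |vs y| |vs x| := fun z hz =>
      my_abs_le_max (hvsmono hy (hSI hz) hz.1.le) (hvsmono (hSI hz) hx hz.2)
    have husb : ∀ z ∈ Set.Ioc y x, |us z| ≤ max |us y| |us x| := fun z hz =>
      my_abs_le_max (husmono hy (hSI hz) hz.1.le) (husmono (hSI hz) hx hz.2)
    have hvsi : Integrable vs (μs.restrict (Set.Ioc y x)) :=
      hbddint μs hSm (hfins hy hx) (haemvs μs hSm hSI) hvsb
    have husi : Integrable us (μs.restrict (Set.Ioc y x)) :=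
      hbddint μs hSm (hfins hy hx) (haemus μs hSm hSI) husb
    have hugi : Integrable (fun w => u w * g w) (μm.restrict (Set.Ioc y x)) :=
      ((hinthu g hgmeas hgbdd x hx)).mono_set (fun w hw => ⟨hSI hw, hw.2⟩)
    have hvgi : Integrable (fun w => v w * g w) (μm.restrict (Set.Ioc y x)) :=
      ((hinthv g hgmeas hgbdd y hy)).mono_set (fun w hw => ⟨hSI hw, hw.1⟩)
    obtain ⟨A, hA⟩ : ∃ A : ℝ → ℝ, ∀ z, A z = ∫ w in Set.Ioc z x, u w * g w ∂μm :=
      ⟨_, fun _ => rfl⟩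
    obtain ⟨B, hB⟩ : ∃ B : ℝ → ℝ, ∀ z, B z = ∫ w in Set.Ioc y z, v w * g w ∂μm :=
      ⟨_, fun _ => rfl⟩
    have hPz : ∀ z ∈ Set.Ioc y x, P z = P x - A z := by
      intro z hz
      have h0 := hPdiff x hx z (hSI hz) hz.2
      rw [hA]; linarith
    have hQz : ∀ z ∈ Set.Ioc y x, Q z = Q y - B z := by
      intro z hz
      have h0 := hQdiff z (hSI hz) y hy hz.1.le
      rw [hB]; linarith
    have hAaem : ∀ (μ : Measure ℝ), AEMeasurable A (μ.restrict (Set.Ioc y x)) := by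
      intro μ
      refine AEMeasurable.congr ((aemeasurable_const (b := P x)).sub (hPaem μ hSm hSI)) ?_
      refine (ae_restrict_mem hSm).mono (fun z hz => ?_)
      dsimp only [Pi.sub_apply]
      rw [hPz z hz]; ring
    have hBaem : ∀ (μ : Measure ℝ), AEMeasurable B (μ.restrict (Set.Ioc y x)) := by
      intro μ
      refine AEMeasurable.congr ((aemeasurable_const (b := Q y)).sub (hQaem μ hSm hSI)) ?_
      refine (ae_restrict_mem hSm).mono (fun z hz => ?_)
      dsimp only [Pi.sub_apply]
      rw [hQz z hz]; ring
    have hAbd : ∀ z ∈ Set.Ioc y x, |A z| ≤ ∫ w in I ∩ Set.Iic x, ‖u w * g w‖ ∂μm := by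
      intro z hz
      rw [hA, ← Real.norm_eq_abs]
      refine le_trans (norm_integral_le_integral_norm _) ?_
      refine setIntegral_mono_set ((hinthu g hgmeas hgbdd x hx)).norm
        (Eventually.of_forall (fun w => norm_nonneg _)) ?_
      exact HasSubset.Subset.eventuallyLE
        (fun w hw => ⟨hIocsub (hSI hz) hx hw, hw.2⟩)
    have hBbd : ∀ z ∈ Set.Ioc y x, |B z| ≤ ∫ w in I ∩ Set.Ioi y, ‖v w * g w‖ ∂μm := by
      intro z hz
      rw [hB, ← Real.norm_eq_abs]
      refine le_trans (norm_integral_le_integral_norm _) ?_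
      refine setIntegral_mono_set ((hinthv g hgmeas hgbdd y hy)).norm
        (Eventually.of_forall (fun w => norm_nonneg _)) ?_
      exact HasSubset.Subset.eventuallyLE
        (fun w hw => ⟨hIocsub hy (hSI hz) hw, hw.1⟩)
    have hvsA : Integrable (fun z => vs z * A z) (μs.restrict (Set.Ioc y x)) := by
      refine hbddint μs hSm (hfins hy hx) ((haemvs μs hSm hSI).mul (hAaem μs))
        (M := (max |vs y| |vs x|) * (∫ w in I ∩ Set.Iic x, ‖u w * g w‖ ∂μm)) ?_
      intro z hz
      rw [abs_mul]
      exact mul_le_mul (hvsb z hz) (hAbd z hz) (abs_nonneg _)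
        (le_trans (abs_nonneg _) (hvsb z hz))
    have husB : Integrable (fun z => us z * B z) (μs.restrict (Set.Ioc y x)) := by
      refine hbddint μs hSm (hfins hy hx) ((haemus μs hSm hSI).mul (hBaem μs))
        (M := (max |us y| |us x|) * (∫ w in I ∩ Set.Ioi y, ‖v w * g w‖ ∂μm)) ?_
      intro z hz
      rw [abs_mul]
      exact mul_le_mul (husb z hz) (hBbd z hz) (abs_nonneg _)
        (le_trans (abs_nonneg _) (husb z hz))
    have hEq : Set.EqOn (fun z => vs z * P z + us z * Q z)
        (fun z => vs z * P x + us z * Q y - (vs z * A z + us z * B z)) (Set.Ioc y x) := by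
      intro z hz
      simp only
      rw [hPz z hz, hQz z hz]; ring
    have hsplit : ∫ z in Set.Ioc y x, (vs z * P z + us z * Q z) ∂μs
        = (∫ z in Set.Ioc y x, vs z ∂μs) * P x + (∫ z in Set.Ioc y x, us z ∂μs) * Q y
          - ((∫ z in Set.Ioc y x, vs z * A z ∂μs)
            + ∫ z in Set.Ioc y x, us z * B z ∂μs) := by
      have i1 : Integrable (fun z => vs z * P x + us z * Q y)
          (μs.restrict (Set.Ioc y x)) := (hvsi.mul_const _).add (husi.mul_const _)
      have i2 : Integrable (fun z => vs z * A z + us z * B z)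
          (μs.restrict (Set.Ioc y x)) := hvsA.add husB
      rw [setIntegral_congr_fun hSm hEq, integral_sub i1 i2,
        integral_add (hvsi.mul_const (P x)) (husi.mul_const (Q y)),
        integral_add hvsA husB, integral_mul_const, integral_mul_const]
    have hT3 : ∫ z in Set.Ioc y x, vs z * A z ∂μs
        = ∫ w in Set.Ioc y x, (v w - v y) * (u w * g w) ∂μm := by
      have e1 : Set.EqOn (fun z => vs z * A z)
          (fun z => vs z * ∫ w in Set.Ioi z, u w * g w ∂(μm.restrict (Set.Ioc y x)))
          (Set.Ioc y x) := by
        intro z hz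
        simp only
        rw [hA, Measure.restrict_restrict measurableSet_Ioi]
        have hseteq : Set.Ioi z ∩ Set.Ioc y x = Set.Ioc z x := by
          ext w
          simp only [Set.mem_inter_iff, Set.mem_Ioi, Set.mem_Ioc]
          constructor
          · rintro ⟨h1, _, h3⟩; exact ⟨h1, h3⟩
          · rintro ⟨h1, h2⟩; exact ⟨h1, lt_trans hz.1 h1, h2⟩
        rw [hseteq]
      rw [setIntegral_congr_fun hSm e1,
        my_fubini_lt (μs.restrict (Set.Ioc y x)) (μm.restrict (Set.Ioc y x)) hvsi hugi]
      refine integral_congr_ae ((ae_restrict_mem hSm).mono (fun w hw => ?_))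
      have hseteq2 : Set.Iio w ∩ Set.Ioc y x = Set.Ioo y w := by
        ext z
        simp only [Set.mem_inter_iff, Set.mem_Iio, Set.mem_Ioo, Set.mem_Ioc]
        constructor
        · rintro ⟨h1, h2, _⟩; exact ⟨h2, h1⟩
        · rintro ⟨h1, h2⟩; exact ⟨h2, h1, le_trans (le_of_lt h2) hw.2⟩
      have hinner : (∫ z in Set.Iio w, vs z ∂(μs.restrict (Set.Ioc y x))) = v w - v y := by
        rw [Measure.restrict_restrict measurableSet_Iio, hseteq2,
          setIntegral_congr_set (my_ae_eq_Ioo_Ioc (hams w (hSI hw)))]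
        have h3 := hv w (hSI hw) y hy
        rw [intervalIntegral.integral_of_le hw.1.le] at h3
        linarith
      dsimp only
      rw [hinner]
    have hT4 : ∫ z in Set.Ioc y x, us z * B z ∂μs
        = ∫ w in Set.Ioc y x, (u x - u w) * (v w * g w) ∂μm := by
      have e1 : Set.EqOn (fun z => us z * B z)
          (fun z => us z * ∫ w in Set.Iic z, v w * g w ∂(μm.restrict (Set.Ioc y x)))
          (Set.Ioc y x) := by
        intro z hz
        simp only
        rw [hB, Measure.restrict_restrict measurableSet_Iic]
        have hseteq : Set.Iic z ∩ Set.Ioc y x = Set.Ioc y z := by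
          ext w
          simp only [Set.mem_inter_iff, Set.mem_Iic, Set.mem_Ioc]
          constructor
          · rintro ⟨h1, h2, _⟩; exact ⟨h2, h1⟩
          · rintro ⟨h1, h2⟩; exact ⟨h2, h1, le_trans h2 hz.2⟩
        rw [hseteq]
      rw [setIntegral_congr_fun hSm e1,
        my_fubini_le (μs.restrict (Set.Ioc y x)) (μm.restrict (Set.Ioc y x)) husi hvgi]
      refine integral_congr_ae ((ae_restrict_mem hSm).mono (fun w hw => ?_))
      have hseteq2 : Set.Ici w ∩ Set.Ioc y x = Set.Icc w x := by
        ext z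
        simp only [Set.mem_inter_iff, Set.mem_Ici, Set.mem_Icc, Set.mem_Ioc]
        constructor
        · rintro ⟨h1, _, h3⟩; exact ⟨h1, h3⟩
        · rintro ⟨h1, h2⟩; exact ⟨h1, lt_of_lt_of_le hw.1 h1, h2⟩
      have hinner : (∫ z in Set.Ici w, us z ∂(μs.restrict (Set.Ioc y x))) = u x - u w := by
        rw [Measure.restrict_restrict measurableSet_Ici, hseteq2,
          setIntegral_congr_set (my_ae_eq_Icc_Ioc hw.2 (hams w (hSI hw)))]
        have h3 := hu x hx w (hSI hw)
        rw [intervalIntegral.integral_of_le hw.2] at h3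
        linarith
      dsimp only
      rw [hinner]
    have hJint : Integrable (fun w => v w * (u w * g w)) (μm.restrict (Set.Ioc y x)) := by
      have hvb : ∀ z ∈ Set.Ioc y x, |v z| ≤ max |v x| |v y| := fun z hz =>
        my_abs_le_max (hvmono.antitoneOn (hSI hz) hx hz.2) (hvmono.antitoneOn hy (hSI hz) hz.1.le)
      refine hbddint μm hSm (hfinm hy hx) ((haemv μm hSm hSI).mul hugi.aemeasurable)
        (M := (max |v x| |v y|) * (C * (max |u y| |u x|))) ?_
      intro z hz
      rw [abs_mul]
      refine mul_le_mul (hvb z hz) ?_ (abs_nonneg _) (le_trans (abs_nonneg _) (hvb z hz))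
      rw [abs_mul, mul_comm]
      refine mul_le_mul (hgbdd z) ?_ (abs_nonneg _) hC0
      exact my_abs_le_max (humono.monotoneOn hy (hSI hz) hz.1.le) (humono.monotoneOn (hSI hz) hx hz.2)
    have hE3 : ∫ w in Set.Ioc y x, (v w - v y) * (u w * g w) ∂μm
        = (∫ w in Set.Ioc y x, v w * (u w * g w) ∂μm) - v y * (P x - P y) := by
      have e : Set.EqOn (fun w => (v w - v y) * (u w * g w))
          (fun w => v w * (u w * g w) - v y * (u w * g w)) (Set.Ioc y x) :=
        fun w _ => by simp only; ring
      rw [setIntegral_congr_fun hSm e, integral_sub hJint (hugi.const_mul _),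
        integral_const_mul]
      have h0 := hPdiff x hx y hy hyx
      have h4 : ∫ w in Set.Ioc y x, u w * g w ∂μm = P x - P y := by linarith
      rw [h4]
    have hE4 : ∫ w in Set.Ioc y x, (u x - u w) * (v w * g w) ∂μm
        = u x * (Q y - Q x) - (∫ w in Set.Ioc y x, v w * (u w * g w) ∂μm) := by
      have e : Set.EqOn (fun w => (u x - u w) * (v w * g w))
          (fun w => u x * (v w * g w) - v w * (u w * g w)) (Set.Ioc y x) :=
        fun w _ => by simp only; ring
      rw [setIntegral_congr_fun hSm e, integral_sub (hvgi.const_mul _) hJint,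
        integral_const_mul]
      have h0 := hQdiff x hx y hy hyx
      have h4 : ∫ w in Set.Ioc y x, v w * g w ∂μm = Q y - Q x := by linarith
      rw [h4]
    have hvsS : ∫ z in Set.Ioc y x, vs z ∂μs = v x - v y := by
      have h3 := hv x hx y hy
      rw [intervalIntegral.integral_of_le hyx] at h3
      linarith
    have husS : ∫ z in Set.Ioc y x, us z ∂μs = u x - u y := by
      have h3 := hu x hx y hy
      rw [intervalIntegral.integral_of_le hyx] at h3
      linarith
    rw [hfPQ x hx, hfPQ y hy, hsplit, hT3, hT4, hE3, hE4, hvsS, husS]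
    ring
  -- ## key identity 2
  have key2 : ∀ x ∈ I, ∀ y ∈ I, y ≤ x →
      (vs x * P x + us x * Q x) - (vs y * P y + us y * Q y)
        = ∫ z in Set.Ioc y x, (r * f z - g z) ∂μm := by
    intro x hx y hy hyx
    have hSI : Set.Ioc y x ⊆ I := hIocsub hy hx
    have hSm : MeasurableSet (Set.Ioc y x) := measurableSet_Ioc
    haveI hfin2 : IsFiniteMeasure (μm.restrict (Set.Ioc y x)) :=
      ⟨by rw [Measure.restrict_apply_univ]; exact hfinm hy hx⟩
    have hub : ∀ z ∈ Set.Ioc y x, |u z| ≤ max |u y| |u x| := fun z hz =>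
      my_abs_le_max (humono.monotoneOn hy (hSI hz) hz.1.le) (humono.monotoneOn (hSI hz) hx hz.2)
    have hvb : ∀ z ∈ Set.Ioc y x, |v z| ≤ max |v x| |v y| := fun z hz =>
      my_abs_le_max (hvmono.antitoneOn (hSI hz) hx hz.2) (hvmono.antitoneOn hy (hSI hz) hz.1.le)
    have hvsb : ∀ z ∈ Set.Ioc y x, |vs z| ≤ max |vs y| |vs x| := fun z hz =>
      my_abs_le_max (hvsmono hy (hSI hz) hz.1.le) (hvsmono (hSI hz) hx hz.2)
    have husb : ∀ z ∈ Set.Ioc y x, |us z| ≤ max |us y| |us x| := fun z hz =>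
      my_abs_le_max (husmono hy (hSI hz) hz.1.le) (husmono (hSI hz) hx hz.2)
    have hui : Integrable u (μm.restrict (Set.Ioc y x)) :=
      hbddint μm hSm (hfinm hy hx) (haemu μm hSm hSI) hub
    have hvi : Integrable v (μm.restrict (Set.Ioc y x)) :=
      hbddint μm hSm (hfinm hy hx) (haemv μm hSm hSI) hvb
    have hgi : Integrable g (μm.restrict (Set.Ioc y x)) :=
      hbddint μm hSm (hfinm hy hx) hgmeas.aemeasurable (fun z _ => hgbdd z)
    have hugi : Integrable (fun w => u w * g w) (μm.restrict (Set.Ioc y x)) :=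
      ((hinthu g hgmeas hgbdd x hx)).mono_set (fun w hw => ⟨hSI hw, hw.2⟩)
    have hvgi : Integrable (fun w => v w * g w) (μm.restrict (Set.Ioc y x)) :=
      ((hinthv g hgmeas hgbdd y hy)).mono_set (fun w hw => ⟨hSI hw, hw.1⟩)
    have hvsug : Integrable (fun w => vs w * (u w * g w)) (μm.restrict (Set.Ioc y x)) := by
      refine hbddint μm hSm (hfinm hy hx) ((haemvs μm hSm hSI).mul hugi.aemeasurable)
        (M := (max |vs y| |vs x|) * (C * (max |u y| |u x|))) ?_
      intro z hz
      rw [abs_mul]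
      refine mul_le_mul (hvsb z hz) ?_ (abs_nonneg _) (le_trans (abs_nonneg _) (hvsb z hz))
      rw [abs_mul, mul_comm]
      exact mul_le_mul (hgbdd z) (hub z hz) (abs_nonneg _) hC0
    have husvg : Integrable (fun w => us w * (v w * g w)) (μm.restrict (Set.Ioc y x)) := by
      refine hbddint μm hSm (hfinm hy hx) ((haemus μm hSm hSI).mul hvgi.aemeasurable)
        (M := (max |us y| |us x|) * (C * (max |v x| |v y|))) ?_
      intro z hz
      rw [abs_mul]
      refine mul_le_mul (husb z hz) ?_ (abs_nonneg _) (le_trans (abs_nonneg _) (husb z hz))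
      rw [abs_mul, mul_comm]
      exact mul_le_mul (hgbdd z) (hvb z hz) (abs_nonneg _) hC0
    obtain ⟨A, hA⟩ : ∃ A : ℝ → ℝ, ∀ z, A z = ∫ w in Set.Ioc z x, u w * g w ∂μm :=
      ⟨_, fun _ => rfl⟩
    obtain ⟨B, hB⟩ : ∃ B : ℝ → ℝ, ∀ z, B z = ∫ w in Set.Ioc y z, v w * g w ∂μm :=
      ⟨_, fun _ => rfl⟩
    have hPz : ∀ z ∈ Set.Ioc y x, P z = P x - A z := by
      intro z hz
      have h0 := hPdiff x hx z (hSI hz) hz.2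
      rw [hA]; linarith
    have hQz : ∀ z ∈ Set.Ioc y x, Q z = Q y - B z := by
      intro z hz
      have h0 := hQdiff z (hSI hz) y hy hz.1.le
      rw [hB]; linarith
    have hAaem : AEMeasurable A (μm.restrict (Set.Ioc y x)) := by
      refine AEMeasurable.congr ((aemeasurable_const (b := P x)).sub (hPaem μm hSm hSI)) ?_
      refine (ae_restrict_mem hSm).mono (fun z hz => ?_)
      dsimp only [Pi.sub_apply]
      rw [hPz z hz]; ring
    have hBaem : AEMeasurable B (μm.restrict (Set.Ioc y x)) := by
      refine AEMeasurable.congr ((aemeasurable_const (b := Q y)).sub (hQaem μm hSm hSI)) ?_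
      refine (ae_restrict_mem hSm).mono (fun z hz => ?_)
      dsimp only [Pi.sub_apply]
      rw [hQz z hz]; ring
    have hAbd : ∀ z ∈ Set.Ioc y x, |A z| ≤ ∫ w in I ∩ Set.Iic x, ‖u w * g w‖ ∂μm := by
      intro z hz
      rw [hA, ← Real.norm_eq_abs]
      refine le_trans (norm_integral_le_integral_norm _) ?_
      refine setIntegral_mono_set ((hinthu g hgmeas hgbdd x hx)).norm
        (Eventually.of_forall (fun w => norm_nonneg _)) ?_
      exact HasSubset.Subset.eventuallyLE
        (fun w hw => ⟨hIocsub (hSI hz) hx hw, hw.2⟩)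
    have hBbd : ∀ z ∈ Set.Ioc y x, |B z| ≤ ∫ w in I ∩ Set.Ioi y, ‖v w * g w‖ ∂μm := by
      intro z hz
      rw [hB, ← Real.norm_eq_abs]
      refine le_trans (norm_integral_le_integral_norm _) ?_
      refine setIntegral_mono_set ((hinthv g hgmeas hgbdd y hy)).norm
        (Eventually.of_forall (fun w => norm_nonneg _)) ?_
      exact HasSubset.Subset.eventuallyLE
        (fun w hw => ⟨hIocsub hy (hSI hz) hw, hw.1⟩)
    have hvA : Integrable (fun z => v z * A z) (μm.restrict (Set.Ioc y x)) := by
      refine hbddint μm hSm (hfinm hy hx) ((haemv μm hSm hSI).mul hAaem)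
        (M := (max |v x| |v y|) * (∫ w in I ∩ Set.Iic x, ‖u w * g w‖ ∂μm)) ?_
      intro z hz
      rw [abs_mul]
      exact mul_le_mul (hvb z hz) (hAbd z hz) (abs_nonneg _)
        (le_trans (abs_nonneg _) (hvb z hz))
    have huB : Integrable (fun z => u z * B z) (μm.restrict (Set.Ioc y x)) := by
      refine hbddint μm hSm (hfinm hy hx) ((haemu μm hSm hSI).mul hBaem)
        (M := (max |u y| |u x|) * (∫ w in I ∩ Set.Ioi y, ‖v w * g w‖ ∂μm)) ?_
      intro z hz
      rw [abs_mul]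
      exact mul_le_mul (hub z hz) (hBbd z hz) (abs_nonneg _)
        (le_trans (abs_nonneg _) (hub z hz))
    have hEq : Set.EqOn (fun z => r * f z - g z)
        (fun z => r * (v z * P x) + r * (u z * Q y)
          - (r * (v z * A z) + (r * (u z * B z) + g z))) (Set.Ioc y x) := by
      intro z hz
      dsimp only
      rw [hfPQ z (hSI hz), hPz z hz, hQz z hz]; ring
    have hsum : ∫ z in Set.Ioc y x, (r * f z - g z) ∂μm
        = r * ((∫ z in Set.Ioc y x, v z ∂μm) * P x)
          + r * ((∫ z in Set.Ioc y x, u z ∂μm) * Q y)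
          - (r * (∫ z in Set.Ioc y x, v z * A z ∂μm)
            + (r * (∫ z in Set.Ioc y x, u z * B z ∂μm) + ∫ z in Set.Ioc y x, g z ∂μm)) := by
      have i1 : Integrable (fun z => r * (v z * P x) + r * (u z * Q y))
          (μm.restrict (Set.Ioc y x)) :=
        ((hvi.mul_const _).const_mul r).add ((hui.mul_const _).const_mul r)
      have i2 : Integrable (fun z => r * (v z * A z) + (r * (u z * B z) + g z))
          (μm.restrict (Set.Ioc y x)) :=
        (hvA.const_mul r).add ((huB.const_mul r).add hgi)
      have i3 : Integrable (fun z => r * (u z * B z) + g z)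
          (μm.restrict (Set.Ioc y x)) := (huB.const_mul r).add hgi
      rw [setIntegral_congr_fun hSm hEq, integral_sub i1 i2,
        integral_add ((hvi.mul_const _).const_mul r) ((hui.mul_const _).const_mul r),
        integral_add (hvA.const_mul r) i3,
        integral_add (huB.const_mul r) hgi,
        integral_const_mul, integral_const_mul, integral_const_mul, integral_const_mul,
        integral_mul_const, integral_mul_const]
    have hT3full : ∫ z in Set.Ioc y x, v z * A z ∂μm
        = (1/r) * ((∫ w in Set.Ioc y x, vs w * (u w * g w) ∂μm) - vs y * (P x - P y)) := by
      have e1 : Set.EqOn (fun z => v z * A z)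
          (fun z => v z * ∫ w in Set.Ioi z, u w * g w ∂(μm.restrict (Set.Ioc y x)))
          (Set.Ioc y x) := by
        intro z hz
        simp only
        rw [hA, Measure.restrict_restrict measurableSet_Ioi]
        have hseteq : Set.Ioi z ∩ Set.Ioc y x = Set.Ioc z x := by
          ext w
          simp only [Set.mem_inter_iff, Set.mem_Ioi, Set.mem_Ioc]
          constructor
          · rintro ⟨h1, _, h3⟩; exact ⟨h1, h3⟩
          · rintro ⟨h1, h2⟩; exact ⟨h1, lt_trans hz.1 h1, h2⟩
        rw [hseteq]
      rw [setIntegral_congr_fun hSm e1,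
        my_fubini_lt (μm.restrict (Set.Ioc y x)) (μm.restrict (Set.Ioc y x)) hvi hugi]
      have step : ∫ w, (∫ z in Set.Iio w, v z ∂(μm.restrict (Set.Ioc y x))) * (u w * g w)
            ∂(μm.restrict (Set.Ioc y x))
          = ∫ w in Set.Ioc y x, ((vs w - vs y)/r) * (u w * g w) ∂μm := by
        refine integral_congr_ae ((ae_restrict_mem hSm).mono (fun w hw => ?_))
        have hseteq2 : Set.Iio w ∩ Set.Ioc y x = Set.Ioo y w := by
          ext z
          simp only [Set.mem_inter_iff, Set.mem_Iio, Set.mem_Ioo, Set.mem_Ioc]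
          constructor
          · rintro ⟨h1, h2, _⟩; exact ⟨h2, h1⟩
          · rintro ⟨h1, h2⟩; exact ⟨h2, h1, le_trans (le_of_lt h2) hw.2⟩
        have hinner : (∫ z in Set.Iio w, v z ∂(μm.restrict (Set.Ioc y x)))
            = (vs w - vs y)/r := by
          rw [Measure.restrict_restrict measurableSet_Iio, hseteq2,
            setIntegral_congr_set (my_ae_eq_Ioo_Ioc (hamm w (hSI hw)))]
          have h3 := hvs w (hSI hw) y hy
          rw [intervalIntegral.integral_of_le hw.1.le] at h3
          rw [eq_div_iff (ne_of_gt hr)]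
          linarith
        dsimp only
        rw [hinner]
      rw [step]
      have e : Set.EqOn (fun w => ((vs w - vs y)/r) * (u w * g w))
          (fun w => (1/r) * (vs w * (u w * g w) - vs y * (u w * g w))) (Set.Ioc y x) := by
        intro w _
        dsimp only
        field_simp
      rw [setIntegral_congr_fun hSm e, integral_const_mul,
        integral_sub hvsug (hugi.const_mul _), integral_const_mul]
      have h0 := hPdiff x hx y hy hyx
      have h4 : ∫ w in Set.Ioc y x, u w * g w ∂μm = P x - P y := by linarith
      rw [h4]
    have hT4full : ∫ z in Set.Ioc y x, u z * B z ∂μm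
        = (1/r) * (us x * (Q y - Q x) - ∫ w in Set.Ioc y x, us w * (v w * g w) ∂μm) := by
      have e1 : Set.EqOn (fun z => u z * B z)
          (fun z => u z * ∫ w in Set.Iic z, v w * g w ∂(μm.restrict (Set.Ioc y x)))
          (Set.Ioc y x) := by
        intro z hz
        simp only
        rw [hB, Measure.restrict_restrict measurableSet_Iic]
        have hseteq : Set.Iic z ∩ Set.Ioc y x = Set.Ioc y z := by
          ext w
          simp only [Set.mem_inter_iff, Set.mem_Iic, Set.mem_Ioc]
          constructor
          · rintro ⟨h1, h2, _⟩; exact ⟨h2, h1⟩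
          · rintro ⟨h1, h2⟩; exact ⟨h2, h1, le_trans h2 hz.2⟩
        rw [hseteq]
      rw [setIntegral_congr_fun hSm e1,
        my_fubini_le (μm.restrict (Set.Ioc y x)) (μm.restrict (Set.Ioc y x)) hui hvgi]
      have step : ∫ w, (∫ z in Set.Ici w, u z ∂(μm.restrict (Set.Ioc y x))) * (v w * g w)
            ∂(μm.restrict (Set.Ioc y x))
          = ∫ w in Set.Ioc y x, ((us x - us w)/r) * (v w * g w) ∂μm := by
        refine integral_congr_ae ((ae_restrict_mem hSm).mono (fun w hw => ?_))
        have hseteq2 : Set.Ici w ∩ Set.Ioc y x = Set.Icc w x := by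
          ext z
          simp only [Set.mem_inter_iff, Set.mem_Ici, Set.mem_Icc, Set.mem_Ioc]
          constructor
          · rintro ⟨h1, _, h3⟩; exact ⟨h1, h3⟩
          · rintro ⟨h1, h2⟩; exact ⟨h1, lt_of_lt_of_le hw.1 h1, h2⟩
        have hinner : (∫ z in Set.Ici w, u z ∂(μm.restrict (Set.Ioc y x)))
            = (us x - us w)/r := by
          rw [Measure.restrict_restrict measurableSet_Ici, hseteq2,
            setIntegral_congr_set (my_ae_eq_Icc_Ioc hw.2 (hamm w (hSI hw)))]
          have h3 := hus x hx w (hSI hw)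
          rw [intervalIntegral.integral_of_le hw.2] at h3
          rw [eq_div_iff (ne_of_gt hr)]
          linarith
        dsimp only
        rw [hinner]
      rw [step]
      have e : Set.EqOn (fun w => ((us x - us w)/r) * (v w * g w))
          (fun w => (1/r) * (us x * (v w * g w) - us w * (v w * g w))) (Set.Ioc y x) := by
        intro w _
        dsimp only
        field_simp
      rw [setIntegral_congr_fun hSm e, integral_const_mul,
        integral_sub (hvgi.const_mul _) husvg, integral_const_mul]
      have h0 := hQdiff x hx y hy hyx
      have h4 : ∫ w in Set.Ioc y x, v w * g w ∂μm = Q y - Q x := by linarith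
      rw [h4]
    have hIV : ∫ z in Set.Ioc y x, v z ∂μm = (vs x - vs y)/r := by
      have h3 := hvs x hx y hy
      rw [intervalIntegral.integral_of_le hyx] at h3
      rw [eq_div_iff (ne_of_gt hr)]
      linarith
    have hIU : ∫ z in Set.Ioc y x, u z ∂μm = (us x - us y)/r := by
      have h3 := hus x hx y hy
      rw [intervalIntegral.integral_of_le hyx] at h3
      rw [eq_div_iff (ne_of_gt hr)]
      linarith
    have hG : ∫ z in Set.Ioc y x, g z ∂μm
        = (∫ w in Set.Ioc y x, us w * (v w * g w) ∂μm)
          - ∫ w in Set.Ioc y x, vs w * (u w * g w) ∂μm := by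
      rw [← integral_sub husvg hvsug]
      refine setIntegral_congr_fun hSm (fun w hw => ?_)
      have hW0 := hW w (hSI hw)
      linear_combination (-(g w)) * hW0
    rw [hsum, hT3full, hT4full, hIV, hIU, hG]
    field_simp
    ring
  -- ## conclusion
  refine ⟨fun z => vs z * P z + us z * Q z, ?_, ?_⟩
  · intro x hx y hy
    rcases le_total y x with h | h
    · rw [intervalIntegral.integral_of_le h]
      exact key1 x hx y hy h
    · have h1 := key1 y hy x hx h
      rw [intervalIntegral.integral_symm, intervalIntegral.integral_of_le h]
      beta_reduce
      linarith
  · intro x hx y hy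
    rcases le_total y x with h | h
    · rw [intervalIntegral.integral_of_le h]
      exact key2 x hx y hy h
    · have h1 := key2 y hy x hx h
      rw [intervalIntegral.integral_symm, intervalIntegral.integral_of_le h]
      beta_reduce
      linarith
end

section
/- Let f ∈ D(L) with f and Lf bounded and continuous on (a,b), where L = 𝒟_m 𝒟_s, and let u_r be the increasing positive solution of Lu = ru with ∫_a^c u_r dm < ∞. Then the limit Q_a := lim_{z→a+} ( f(z) 𝒟_s u_r(z) − u_r(z) 𝒟_s f(z) ) exists and is finite, and for all x ∈ (a,b): ∫_a^x (Lf)(y) u_r(y) dm(y) = Q_a + W[u_r,f](x) + r ∫_a^x f(y) u_r(y) dm(y), where W[u_r,f](x) = u_r(x) 𝒟_s f(x) − f(x) 𝒟_s u_r(x). -/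
open MeasureTheory Real Filter Topology

section Aux

lemma bdd_int (ν : Measure ℝ) (J : Set ℝ) (φ : ℝ → ℝ) (C : ℝ)
    (hfin : ν J ≠ ⊤) (hm : AEStronglyMeasurable φ (ν.restrict J))
    (hb : ∀ t ∈ J, |φ t| ≤ C) (hJ : MeasurableSet J) : IntegrableOn φ J ν := by
  haveI : IsFiniteMeasure (ν.restrict J) :=
    ⟨by rwa [Measure.restrict_apply_univ, lt_top_iff_ne_top]⟩
  refine Integrable.mono' (integrable_const C) hm ?_
  filter_upwards [ae_restrict_mem hJ] with t ht
  simpa using hb t ht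

lemma ioo_ae_ioc (ν : Measure ℝ) {z : ℝ} (hz : ν {z} = 0) (y : ℝ) :
    (Set.Ioo y z : Set ℝ) =ᵐ[ν] Set.Ioc y z := by
  rw [MeasureTheory.ae_eq_set]
  constructor
  · rw [Set.diff_eq_empty.mpr Set.Ioo_subset_Ioc_self]; exact measure_empty
  · refine measure_mono_null (fun t ht => ?_) hz
    rcases ht with ⟨⟨h1, h2⟩, h3⟩
    simp only [Set.mem_Ioo, not_and, not_lt] at h3
    exact Set.mem_singleton_iff.mpr (le_antisymm h2 (h3 h1))

lemma ico_ae_ioc (ν : Measure ℝ) {p q : ℝ} (hp : ν {p} = 0) (hq : ν {q} = 0) :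
    (Set.Ico p q : Set ℝ) =ᵐ[ν] Set.Ioc p q := by
  rw [MeasureTheory.ae_eq_set]
  constructor
  · refine measure_mono_null (fun t ht => ?_) hp
    rcases ht with ⟨⟨h1, h2⟩, h3⟩
    simp only [Set.mem_Ioc, not_and, not_le] at h3
    rcases lt_or_eq_of_le h1 with h | h
    · exact absurd (h3 h) (not_lt.mpr h2.le)
    · exact Set.mem_singleton_iff.mpr h.symm
  · refine measure_mono_null (fun t ht => ?_) hq
    rcases ht with ⟨⟨h1, h2⟩, h3⟩
    simp only [Set.mem_Ico, not_and, not_lt] at h3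
    exact Set.mem_singleton_iff.mpr (le_antisymm h2 (h3 h1.le))

lemma atom_zero {I : Set ℝ} (hIopen : IsOpen I) (m : ℝ → ℝ) (hmcont : ContinuousOn m I)
    (μ : Measure ℝ)
    (hμ : ∀ x ∈ I, ∀ y ∈ I, x ≤ y → μ (Set.Ioc x y) = ENNReal.ofReal (m y - m x))
    {p : ℝ} (hp : p ∈ I) : μ {p} = 0 := by
  refine le_antisymm ?_ zero_le
  refine ENNReal.le_of_forall_pos_le_add fun ε hε _ => ?_
  have hca : ContinuousAt m p := hmcont.continuousAt (hIopen.mem_nhds hp)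
  rw [Metric.continuousAt_iff] at hca
  obtain ⟨δ1, hδ1, hδ1'⟩ := hca (ε : ℝ) (by exact_mod_cast hε)
  obtain ⟨δ2, hδ2, hδ2'⟩ := Metric.isOpen_iff.mp hIopen p hp
  set t := p - min δ1 δ2 / 2 with htdef
  have hmin : (0:ℝ) < min δ1 δ2 := lt_min hδ1 hδ2
  have htp : t < p := by simp only [htdef]; linarith
  have hdist : dist t p < min δ1 δ2 := by
    rw [Real.dist_eq, htdef]
    rw [abs_of_nonpos (by linarith)]
    linarith
  have htI : t ∈ I := hδ2' (Metric.mem_ball.mpr (hdist.trans_le (min_le_right _ _)))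
  have hle : μ {p} ≤ μ (Set.Ioc t p) :=
    measure_mono (fun z hz => by rw [Set.mem_singleton_iff] at hz; subst hz; exact ⟨htp, le_refl _⟩)
  rw [hμ t htI p hp htp.le] at hle
  have hmt : m p - m t < (ε : ℝ) := by
    have := hδ1' (show dist t p < δ1 from hdist.trans_le (min_le_left _ _))
    rw [Real.dist_eq] at this
    calc m p - m t ≤ |m t - m p| := by rw [abs_sub_comm]; exact le_abs_self _
      _ < _ := this
  calc μ {p} ≤ ENNReal.ofReal (m p - m t) := hle
    _ ≤ ENNReal.ofReal (ε : ℝ) := ENNReal.ofReal_le_ofReal hmt.le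
    _ = (ε : ENNReal) := ENNReal.ofReal_coe_nnreal
    _ = 0 + ε := (zero_add _).symm

lemma swap_aux (μ ν : Measure ℝ) (y x : ℝ)
    (hμ : μ (Set.Ioc y x) ≠ ⊤) (hν : ν (Set.Ioc y x) ≠ ⊤)
    (g h : ℝ → ℝ) (Cg Ch : ℝ)
    (hgm : AEStronglyMeasurable g (μ.restrict (Set.Ioc y x)))
    (hhm : AEStronglyMeasurable h (ν.restrict (Set.Ioc y x)))
    (hgb : ∀ t ∈ Set.Ioc y x, |g t| ≤ Cg) (hhb : ∀ t ∈ Set.Ioc y x, |h t| ≤ Ch) :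
    ∫ t in Set.Ioc y x, g t * (∫ z in Set.Ioc t x, h z ∂ν) ∂μ
      = ∫ z in Set.Ioc y x, (∫ t in Set.Ioo y z, g t ∂μ) * h z ∂ν := by
  haveI hμf : IsFiniteMeasure (μ.restrict (Set.Ioc y x)) :=
    ⟨by rwa [Measure.restrict_apply_univ, lt_top_iff_ne_top]⟩
  haveI hνf : IsFiniteMeasure (ν.restrict (Set.Ioc y x)) :=
    ⟨by rwa [Measure.restrict_apply_univ, lt_top_iff_ne_top]⟩
  set M := (μ.restrict (Set.Ioc y x)).prod (ν.restrict (Set.Ioc y x)) with hM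
  set K : ℝ → ℝ → ℝ := fun t z => {p : ℝ × ℝ | p.1 < p.2}.indicator
      (fun p => g p.1 * h p.2) (t, z) with hK
  have hmeasK : AEStronglyMeasurable (Function.uncurry K) M := by
    have : AEStronglyMeasurable (fun p : ℝ × ℝ => g p.1 * h p.2) M :=
      (hgm.comp_fst).mul (hhm.comp_snd)
    exact this.indicator (measurableSet_lt measurable_fst measurable_snd)
  have hintK : Integrable (Function.uncurry K) M := by
    refine ⟨hmeasK, ?_⟩
    have hb : ∀ᵐ p ∂M, ‖Function.uncurry K p‖ ≤ |Cg * Ch| := by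
      have hae : ∀ᵐ p ∂M, p ∈ (Set.Ioc y x) ×ˢ (Set.Ioc y x) := by
        have hrr : M = ((μ.restrict (Set.Ioc y x)).prod
            (ν.restrict (Set.Ioc y x))).restrict ((Set.Ioc y x) ×ˢ (Set.Ioc y x)) := by
          conv_lhs => rw [hM,
            show μ.restrict (Set.Ioc y x)
              = (μ.restrict (Set.Ioc y x)).restrict (Set.Ioc y x) by
                rw [Measure.restrict_restrict measurableSet_Ioc, Set.inter_self],
            show ν.restrict (Set.Ioc y x)
              = (ν.restrict (Set.Ioc y x)).restrict (Set.Ioc y x) by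
                rw [Measure.restrict_restrict measurableSet_Ioc, Set.inter_self]]
          rw [Measure.prod_restrict]
        rw [hrr]
        exact ae_restrict_mem (measurableSet_Ioc.prod measurableSet_Ioc)
      filter_upwards [hae] with p hp
      have h1 : ‖g p.1 * h p.2‖ ≤ |Cg * Ch| := by
        rw [Real.norm_eq_abs, abs_mul]
        calc |g p.1| * |h p.2| ≤ Cg * Ch :=
              mul_le_mul (hgb _ hp.1) (hhb _ hp.2) (abs_nonneg _)
                ((abs_nonneg (g p.1)).trans (hgb _ hp.1))
          _ ≤ |Cg * Ch| := le_abs_self _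
      have hKp : Function.uncurry K p
          = {q : ℝ × ℝ | q.1 < q.2}.indicator (fun q => g q.1 * h q.2) p := by
        simp [Function.uncurry, hK]
      rw [hKp]
      exact (norm_indicator_le_norm_self _ _).trans h1
    exact HasFiniteIntegral.of_bounded hb
  have hswap := integral_integral_swap hintK
  have hL : ∫ t, (∫ z, K t z ∂(ν.restrict (Set.Ioc y x))) ∂(μ.restrict (Set.Ioc y x))
      = ∫ t in Set.Ioc y x, g t * (∫ z in Set.Ioc t x, h z ∂ν) ∂μ := by
    refine setIntegral_congr_fun measurableSet_Ioc (fun t ht => ?_)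
    have h1 : (fun z => K t z) = (Set.Ioi t).indicator (fun z => g t * h z) := by
      funext z
      by_cases hz : t < z
      · simp [hK, Set.indicator_of_mem, hz, Set.mem_Ioi.mpr hz]
      · simp [hK, Set.indicator, hz, Set.mem_Ioi]
    rw [h1, integral_indicator measurableSet_Ioi, Measure.restrict_restrict measurableSet_Ioi]
    have h2 : Set.Ioi t ∩ Set.Ioc y x = Set.Ioc t x := by
      ext z
      simp only [Set.mem_inter_iff, Set.mem_Ioi, Set.mem_Ioc]
      exact ⟨fun h' => ⟨h'.1, h'.2.2⟩, fun h' => ⟨h'.1, ht.1.trans h'.1, h'.2⟩⟩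
    rw [h2, integral_const_mul]
  have hR : ∫ z, (∫ t, K t z ∂(μ.restrict (Set.Ioc y x))) ∂(ν.restrict (Set.Ioc y x))
      = ∫ z in Set.Ioc y x, (∫ t in Set.Ioo y z, g t ∂μ) * h z ∂ν := by
    refine setIntegral_congr_fun measurableSet_Ioc (fun z hz => ?_)
    have h1 : (fun t => K t z) = (Set.Iio z).indicator (fun t => g t * h z) := by
      funext t
      by_cases htz : t < z
      · simp [hK, Set.indicator_of_mem, htz, Set.mem_Iio.mpr htz]
      · simp [hK, Set.indicator, htz, Set.mem_Iio]
    rw [h1, integral_indicator measurableSet_Iio, Measure.restrict_restrict measurableSet_Iio]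
    have h2 : Set.Iio z ∩ Set.Ioc y x = Set.Ioo y z := by
      ext t
      simp only [Set.mem_inter_iff, Set.mem_Iio, Set.mem_Ioc, Set.mem_Ioo]
      exact ⟨fun h' => ⟨h'.2.1, h'.1⟩, fun h' => ⟨h'.2, h'.1, h'.2.le.trans hz.2⟩⟩
    rw [h2, integral_mul_const]
  rw [← hL, ← hR]
  exact hswap

end Aux

/-- for `f ∈ D(L)` with `f, Lf` bounded continuous and `u_r` the
increasing positive solution of `Lu = ru` with `∫_a^c u_r dm < ∞`, the boundary limit
`Q_a = lim_{z→a+} (f 𝒟_s u_r − u_r 𝒟_s f)(z)` exists finitely, and for all `x ∈ (a,b)`: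
`∫_a^x (Lf) u_r dm = Q_a + W[u_r,f](x) + r ∫_a^x f u_r dm`. -/


theorem boundary_term_exists_and_identity
    (a b : EReal) (hab : a < b)
    (I : Set ℝ) (hI : I = {x : ℝ | a < (x : EReal) ∧ (x : EReal) < b})
    -- the filter of approach to `a` from the right within the interval
    (F : Filter ℝ) (hF : F = Filter.comap (fun x : ℝ => (x : EReal)) (𝓝[>] a))
    (s m : ℝ → ℝ)
    (hs : StrictMonoOn s I) (hscont : ContinuousOn s I)
    (hm : StrictMonoOn m I) (hmcont : ContinuousOn m I)
    (μs μm : Measure ℝ)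
    (hμs : ∀ x ∈ I, ∀ y ∈ I, x ≤ y → μs (Set.Ioc x y) = ENNReal.ofReal (s y - s x))
    (hμm : ∀ x ∈ I, ∀ y ∈ I, x ≤ y → μm (Set.Ioc x y) = ENNReal.ofReal (m y - m x))
    (r : ℝ) (hr : 0 < r)
    (f fs Lf : ℝ → ℝ)
    -- `fs = 𝒟_s f`, `Lf = 𝒟_m 𝒟_s f`, with `f`, `Lf` bounded and continuous on `I`
    (hf : ∀ x ∈ I, ∀ y ∈ I, f x - f y = ∫ z in y..x, fs z ∂μs)
    (hfs : ∀ x ∈ I, ∀ y ∈ I, fs x - fs y = ∫ z in y..x, Lf z ∂μm)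
    (hfcont : ContinuousOn f I) (hLfcont : ContinuousOn Lf I)
    (Cf CLf : ℝ) (hfbdd : ∀ x ∈ I, |f x| ≤ Cf) (hLfbdd : ∀ x ∈ I, |Lf x| ≤ CLf)
    (u us : ℝ → ℝ)
    (hupos : ∀ x ∈ I, 0 < u x) (humono : StrictMonoOn u I)
    (hu : ∀ x ∈ I, ∀ y ∈ I, u x - u y = ∫ z in y..x, us z ∂μs)
    (hus : ∀ x ∈ I, ∀ y ∈ I, us x - us y = r * ∫ z in y..x, u z ∂μm)
    -- `∫_a^c u_r dm < ∞`
    (c : ℝ) (hc : c ∈ I) (huintm : IntegrableOn u (I ∩ Set.Iio c) μm) :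
    ∃ Qa : ℝ,
      Tendsto (fun z => f z * us z - u z * fs z) F (𝓝 Qa) ∧
      ∀ x ∈ I,
        (∫ y in I ∩ Set.Iio x, Lf y * u y ∂μm)
          = Qa + (u x * fs x - f x * us x)
            + r * ∫ y in I ∩ Set.Iio x, f y * u y ∂μm := by
  -- basic structural facts
  have hIopen : IsOpen I := by
    rw [hI]
    exact (isOpen_Ioo (a := a) (b := b)).preimage continuous_coe_real_ereal
  have hseg : ∀ ⦃p q t : ℝ⦄, p ∈ I → q ∈ I → p ≤ t → t ≤ q → t ∈ I := by
    intro p q t hp hq hpt htq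
    rw [hI] at hp hq ⊢
    exact ⟨lt_of_lt_of_le hp.1 (EReal.coe_le_coe_iff.mpr hpt),
      lt_of_le_of_lt (EReal.coe_le_coe_iff.mpr htq) hq.2⟩
  have hIoc_sub : ∀ ⦃p q : ℝ⦄, p ∈ I → q ∈ I → Set.Ioc p q ⊆ I :=
    fun p q hp hq t ht => hseg hp hq ht.1.le ht.2
  have hμmfin : ∀ p ∈ I, ∀ q ∈ I, μm (Set.Ioc p q) ≠ ⊤ := by
    intro p hp q hq
    rcases le_or_gt p q with h | h
    · rw [hμm p hp q hq h]; exact ENNReal.ofReal_ne_top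
    · rw [Set.Ioc_eq_empty (not_lt.mpr h.le)]; simp
  have hμsfin : ∀ p ∈ I, ∀ q ∈ I, μs (Set.Ioc p q) ≠ ⊤ := by
    intro p hp q hq
    rcases le_or_gt p q with h | h
    · rw [hμs p hp q hq h]; exact ENNReal.ofReal_ne_top
    · rw [Set.Ioc_eq_empty (not_lt.mpr h.le)]; simp
  have hatomm : ∀ p ∈ I, μm {p} = 0 := fun p hp => atom_zero hIopen m hmcont μm hμm hp
  -- measurability facts
  have humo : MonotoneOn u I := humono.monotoneOn
  have hums : ∀ (J : Set ℝ), MeasurableSet J → J ⊆ I →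
      AEStronglyMeasurable u (μm.restrict J) := fun J hJm hJI =>
    (aemeasurable_restrict_of_monotoneOn hJm (humo.mono hJI)).aestronglyMeasurable
  have hmono_meas : ∀ (φ : ℝ → ℝ), ContinuousOn φ I → ∀ (ν : Measure ℝ) (J : Set ℝ),
      MeasurableSet J → J ⊆ I → AEStronglyMeasurable φ (ν.restrict J) := by
    intro φ hφ ν J hJm hJI
    have h1 : AEStronglyMeasurable φ (ν.restrict I) :=
      hφ.aestronglyMeasurable hIopen.measurableSet
    exact h1.mono_measure (Measure.restrict_mono hJI le_rfl)
  -- representations and basic integrability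
  have hCLf0 : 0 ≤ CLf := le_trans (abs_nonneg _) (hLfbdd c hc)
  have hCf0 : 0 ≤ Cf := le_trans (abs_nonneg _) (hfbdd c hc)
  have hurep : ∀ t ∈ I, ∀ q ∈ I, t ≤ q → u q - u t = ∫ z in Set.Ioc t q, us z ∂μs := by
    intro t ht q hq htq
    rw [hu q hq t ht, intervalIntegral.integral_of_le htq]
  have hfrep : ∀ t ∈ I, ∀ q ∈ I, t ≤ q → f q - f t = ∫ z in Set.Ioc t q, fs z ∂μs := by
    intro t ht q hq htq
    rw [hf q hq t ht, intervalIntegral.integral_of_le htq]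
  have hfsrep : ∀ t ∈ I, ∀ q ∈ I, t ≤ q → fs q - fs t = ∫ z in Set.Ioc t q, Lf z ∂μm := by
    intro t ht q hq htq
    rw [hfs q hq t ht, intervalIntegral.integral_of_le htq]
  have husrep : ∀ t ∈ I, ∀ q ∈ I, t ≤ q → us q - us t = r * ∫ z in Set.Ioc t q, u z ∂μm := by
    intro t ht q hq htq
    rw [hus q hq t ht, intervalIntegral.integral_of_le htq]
  have huint : ∀ p ∈ I, ∀ q ∈ I, IntegrableOn u (Set.Ioc p q) μm := by
    intro p hp q hq
    refine bdd_int μm _ u (u q) (hμmfin p hp q hq)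
      (hums _ measurableSet_Ioc (hIoc_sub hp hq)) ?_ measurableSet_Ioc
    intro t ht
    have htI := hIoc_sub hp hq ht
    rw [abs_of_pos (hupos t htI)]
    exact humo htI hq ht.2
  have hLfint : ∀ p ∈ I, ∀ q ∈ I, IntegrableOn Lf (Set.Ioc p q) μm := fun p hp q hq =>
    bdd_int μm _ Lf CLf (hμmfin p hp q hq)
      (hmono_meas Lf hLfcont μm _ measurableSet_Ioc (hIoc_sub hp hq))
      (fun t ht => hLfbdd t (hIoc_sub hp hq ht)) measurableSet_Ioc
  have husint : ∀ p ∈ I, ∀ q ∈ I, IntegrableOn us (Set.Ioc p q) μs := by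
    intro p hp q hq
    rcases lt_or_ge p q with h | h
    · by_contra hni
      have h0 := hu q hq p hp
      rw [intervalIntegral.integral_of_le h.le, MeasureTheory.integral_undef hni] at h0
      have := humono hp hq h
      linarith
    · rw [Set.Ioc_eq_empty (not_lt.mpr h)]; exact integrableOn_empty
  -- integral of u over Ioc sub-intervals is nonneg and bounded
  have huIoc_nonneg : ∀ p q : ℝ, p ∈ I → q ∈ I → 0 ≤ ∫ z in Set.Ioc p q, u z ∂μm := by
    intro p q hp hq
    refine setIntegral_nonneg measurableSet_Ioc (fun z hz => ?_)
    exact (hupos z (hIoc_sub hp hq hz)).le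
  have huIoc_le : ∀ p ∈ I, ∀ q ∈ I, ∀ t ∈ Set.Ioc p q,
      ∫ z in Set.Ioc t q, u z ∂μm ≤ u q * (μm (Set.Ioc p q)).toReal := by
    intro p hp q hq t ht
    have htI := hIoc_sub hp hq ht
    calc ∫ z in Set.Ioc t q, u z ∂μm ≤ ∫ z in Set.Ioc p q, u z ∂μm := by
          refine setIntegral_mono_set (huint p hp q hq) ?_
            (HasSubset.Subset.eventuallyLE (Set.Ioc_subset_Ioc_left ht.1.le))
          filter_upwards [ae_restrict_mem measurableSet_Ioc] with z hz
          exact (hupos z (hIoc_sub hp hq hz)).le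
      _ ≤ ∫ _ in Set.Ioc p q, u q ∂μm := by
          refine setIntegral_mono_on (huint p hp q hq) ?_ measurableSet_Ioc (fun z hz => ?_)
          · exact integrableOn_const (hμmfin p hp q hq)
          · exact humo (hIoc_sub hp hq hz) hq hz.2
      _ = u q * (μm (Set.Ioc p q)).toReal := by rw [setIntegral_const, smul_eq_mul, mul_comm, measureReal_def]
  have husbd : ∀ p ∈ I, ∀ q ∈ I, ∀ t ∈ Set.Ioc p q,
      |us t| ≤ |us q| + r * (u q * (μm (Set.Ioc p q)).toReal) := by
    intro p hp q hq t ht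
    have htI := hIoc_sub hp hq ht
    have h1 := husrep t htI q hq ht.2
    have h2 := huIoc_nonneg t q htI hq
    have h3 := huIoc_le p hp q hq t ht
    have : us t = us q - r * ∫ z in Set.Ioc t q, u z ∂μm := by linarith
    rw [this]
    calc |us q - r * ∫ z in Set.Ioc t q, u z ∂μm|
        ≤ |us q| + |r * ∫ z in Set.Ioc t q, u z ∂μm| := abs_sub _ _
      _ ≤ |us q| + r * (u q * (μm (Set.Ioc p q)).toReal) := by
          rw [abs_mul, abs_of_pos hr, abs_of_nonneg h2]
          have := mul_le_mul_of_nonneg_left h3 hr.le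
          linarith
  have hfsbd : ∀ p ∈ I, ∀ q ∈ I, ∀ t ∈ Set.Ioc p q,
      |fs t| ≤ |fs q| + CLf * (μm (Set.Ioc p q)).toReal := by
    intro p hp q hq t ht
    have htI := hIoc_sub hp hq ht
    have h1 := hfsrep t htI q hq ht.2
    have h2 : |∫ z in Set.Ioc t q, Lf z ∂μm| ≤ CLf * (μm (Set.Ioc p q)).toReal := by
      have h3 : ‖∫ z in Set.Ioc t q, Lf z ∂μm‖ ≤ CLf * (μm (Set.Ioc t q)).toReal :=
        norm_setIntegral_le_of_norm_le_const
          (lt_top_iff_ne_top.mpr (hμmfin t htI q hq))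
          (fun z hz => by
            rw [Real.norm_eq_abs]; exact hLfbdd z (hIoc_sub htI hq hz))
      rw [Real.norm_eq_abs] at h3
      refine h3.trans (mul_le_mul_of_nonneg_left ?_ hCLf0)
      exact ENNReal.toReal_mono (hμmfin p hp q hq)
        (measure_mono (Set.Ioc_subset_Ioc_left ht.1.le))
    have : fs t = fs q - ∫ z in Set.Ioc t q, Lf z ∂μm := by linarith
    rw [this]
    calc |fs q - ∫ z in Set.Ioc t q, Lf z ∂μm|
        ≤ |fs q| + |∫ z in Set.Ioc t q, Lf z ∂μm| := abs_sub _ _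
      _ ≤ |fs q| + CLf * (μm (Set.Ioc p q)).toReal := by linarith
  -- measurability of fs with respect to μs
  have hmaxsplit : ∀ xx : ℝ, xx = max xx 0 - max (-xx) 0 := by
    intro xx
    rcases le_total xx 0 with h | h
    · rw [max_eq_right h, max_eq_left (neg_nonneg.mpr h)]; ring
    · rw [max_eq_left h, max_eq_right (neg_nonpos.mpr h)]; ring
  have hfsm : ∀ p ∈ I, ∀ q ∈ I, AEStronglyMeasurable fs (μs.restrict (Set.Ioc p q)) := by
    intro p hp q hq
    rcases lt_or_ge p q with hpq | hpq
    swap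
    · rw [Set.Ioc_eq_empty (not_lt.mpr hpq), Measure.restrict_empty]
      exact aestronglyMeasurable_zero_measure fs
    set A1 : ℝ → ℝ := fun t => ∫ z in Set.Ioc t q, max (Lf z) 0 ∂μm with hA1def
    set A2 : ℝ → ℝ := fun t => ∫ z in Set.Ioc t q, max (-Lf z) 0 ∂μm with hA2def
    have hmax1int : ∀ t ∈ I, IntegrableOn (fun z => max (Lf z) 0) (Set.Ioc t q) μm := by
      intro t ht
      exact (hLfint t ht q hq).pos_part
    have hmax2int : ∀ t ∈ I, IntegrableOn (fun z => max (-Lf z) 0) (Set.Ioc t q) μm := by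
      intro t ht
      exact (hLfint t ht q hq).neg_part
    have hA1anti : AntitoneOn A1 (Set.Ioc p q) := by
      intro t1 ht1 t2 ht2 h12
      refine setIntegral_mono_set (hmax1int t1 (hIoc_sub hp hq ht1)) ?_
        (HasSubset.Subset.eventuallyLE (Set.Ioc_subset_Ioc_left h12))
      exact Eventually.of_forall (fun z => le_max_right _ _)
    have hA2anti : AntitoneOn A2 (Set.Ioc p q) := by
      intro t1 ht1 t2 ht2 h12
      refine setIntegral_mono_set (hmax2int t1 (hIoc_sub hp hq ht1)) ?_
        (HasSubset.Subset.eventuallyLE (Set.Ioc_subset_Ioc_left h12))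
      exact Eventually.of_forall (fun z => le_max_right _ _)
    have hA1m : AEMeasurable A1 (μs.restrict (Set.Ioc p q)) :=
      aemeasurable_restrict_of_antitoneOn measurableSet_Ioc hA1anti
    have hA2m : AEMeasurable A2 (μs.restrict (Set.Ioc p q)) :=
      aemeasurable_restrict_of_antitoneOn measurableSet_Ioc hA2anti
    have heq : (fun t => fs q - A1 t + A2 t) =ᵐ[μs.restrict (Set.Ioc p q)] fs := by
      filter_upwards [ae_restrict_mem measurableSet_Ioc] with t ht
      have htI := hIoc_sub hp hq ht
      have h1 := hfsrep t htI q hq ht.2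
      have h2 : ∫ z in Set.Ioc t q, Lf z ∂μm = A1 t - A2 t := by
        rw [hA1def, hA2def]
        rw [← integral_sub (hmax1int t htI) (hmax2int t htI)]
        exact setIntegral_congr_fun measurableSet_Ioc (fun z _ => hmaxsplit (Lf z))
      have : fs q - fs t = A1 t - A2 t := by rw [h1, h2]
      linarith
    exact ((((aemeasurable_const (b := fs q)).sub hA1m).add hA2m).aestronglyMeasurable).congr heq
  -- the key Green identity on Ioc y x
  have hstar : ∀ y ∈ I, ∀ x ∈ I, y ≤ x →
      (u x * fs x - f x * us x) - (u y * fs y - f y * us y)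
        = ∫ t in Set.Ioc y x, (Lf t * u t - r * (f t * u t)) ∂μm := by
    intro y hy x hx hyx
    rcases eq_or_lt_of_le hyx with rfl | hlt
    · rw [Set.Ioc_self, Measure.restrict_empty, integral_zero_measure]; ring
    set J := Set.Ioc y x with hJdef
    have hJI : J ⊆ I := hIoc_sub hy hx
    have hJm : MeasurableSet J := measurableSet_Ioc
    have hμmJ := hμmfin y hy x hx
    have hμsJ := hμsfin y hy x hx
    have hubd : ∀ t ∈ J, |u t| ≤ u x := by
      intro t ht
      rw [abs_of_pos (hupos t (hJI ht))]
      exact humo (hJI ht) hx ht.2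
    set Bus := |us x| + r * (u x * (μm J).toReal) with hBusdef
    set Bfs := |fs x| + CLf * (μm J).toReal with hBfsdef
    have husbdJ : ∀ t ∈ J, |us t| ≤ Bus := fun t ht => husbd y hy x hx t ht
    have hfsbdJ : ∀ t ∈ J, |fs t| ≤ Bfs := fun t ht => hfsbd y hy x hx t ht
    have hBus0 : 0 ≤ Bus := le_trans (abs_nonneg _) (husbdJ x ⟨hlt, le_refl x⟩)
    have hBfs0 : 0 ≤ Bfs := le_trans (abs_nonneg _) (hfsbdJ x ⟨hlt, le_refl x⟩)
    have hLfmJ : AEStronglyMeasurable Lf (μm.restrict J) :=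
      hmono_meas Lf hLfcont μm J hJm hJI
    have hfmJ : AEStronglyMeasurable f (μm.restrict J) :=
      hmono_meas f hfcont μm J hJm hJI
    have humJ : AEStronglyMeasurable u (μm.restrict J) := hums J hJm hJI
    have husmJ : AEStronglyMeasurable us (μs.restrict J) :=
      (husint y hy x hx).aestronglyMeasurable
    have hfsmJ : AEStronglyMeasurable fs (μs.restrict J) := hfsm y hy x hx
    -- integrability
    have intLU : IntegrableOn (fun t => Lf t * u t) J μm := by
      refine bdd_int μm J _ (CLf * u x) hμmJ (hLfmJ.mul humJ) (fun t ht => ?_) hJm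
      rw [abs_mul]
      exact mul_le_mul (hLfbdd t (hJI ht)) (hubd t ht) (abs_nonneg _) hCLf0
    have intUF : IntegrableOn (fun t => u t * f t) J μm := by
      refine bdd_int μm J _ (u x * Cf) hμmJ (humJ.mul hfmJ) (fun t ht => ?_) hJm
      rw [abs_mul]
      exact mul_le_mul (hubd t ht) (hfbdd t (hJI ht)) (abs_nonneg _) (hupos x hx).le
    have intFSUS : IntegrableOn (fun z => fs z * us z) J μs := by
      refine bdd_int μs J _ (Bfs * Bus) hμsJ (hfsmJ.mul husmJ) (fun t ht => ?_) hJm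
      rw [abs_mul]
      exact mul_le_mul (hfsbdJ t ht) (husbdJ t ht) (abs_nonneg _) hBfs0
    have intFS : IntegrableOn fs J μs := bdd_int μs J fs Bfs hμsJ hfsmJ hfsbdJ hJm
    have intUS : IntegrableOn us J μs := husint y hy x hx
    have intLf : IntegrableOn Lf J μm := hLfint y hy x hx
    have intU : IntegrableOn u J μm := huint y hy x hx
    -- PR1 chain
    have hswap1 := swap_aux μm μs y x hμmJ hμsJ Lf us CLf Bus hLfmJ husmJ
      (fun t ht => hLfbdd t (hJI ht)) husbdJ
    have e1 : ∫ t in J, Lf t * (u x - u t) ∂μm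
        = ∫ t in J, Lf t * (∫ z in Set.Ioc t x, us z ∂μs) ∂μm := by
      refine setIntegral_congr_fun hJm (fun t ht => ?_)
      rw [hurep t (hJI ht) x hx ht.2]
    have e2 : ∀ z ∈ J, (∫ t in Set.Ioo y z, Lf t ∂μm) = fs z - fs y := by
      intro z hz
      rw [setIntegral_congr_set (ioo_ae_ioc μm (hatomm z (hJI hz)) y)]
      exact (hfsrep y hy z (hJI hz) hz.1.le).symm
    have e3 : ∫ z in J, (∫ t in Set.Ioo y z, Lf t ∂μm) * us z ∂μs
        = ∫ z in J, (fs z * us z - fs y * us z) ∂μs := by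
      refine setIntegral_congr_fun hJm (fun z hz => ?_)
      rw [e2 z hz]; ring
    have e4 : ∫ z in J, (fs z * us z - fs y * us z) ∂μs
        = (∫ z in J, fs z * us z ∂μs) - fs y * ∫ z in J, us z ∂μs := by
      rw [integral_sub intFSUS (intUS.const_mul (fs y)), integral_const_mul]
    have intdiff1 : IntegrableOn (fun t => Lf t * (u x - u t)) J μm := by
      have hfe : (fun t => Lf t * (u x - u t)) = fun t => Lf t * u x - Lf t * u t := by
        funext t; ring
      rw [hfe]; exact (intLf.mul_const (u x)).sub intLU
    have e5 : ∫ t in J, Lf t * u x ∂μm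
        = (∫ t in J, Lf t * u t ∂μm) + ∫ t in J, Lf t * (u x - u t) ∂μm := by
      rw [← integral_add intLU intdiff1]
      refine setIntegral_congr_fun hJm (fun t _ => ?_); ring
    have PR1 : u x * fs x - u y * fs y
        = (∫ t in J, Lf t * u t ∂μm) + ∫ z in J, fs z * us z ∂μs := by
      calc u x * fs x - u y * fs y
          = u x * (fs x - fs y) + fs y * (u x - u y) := by ring
        _ = (∫ t in J, Lf t ∂μm) * u x + fs y * ∫ z in J, us z ∂μs := by
            rw [hfsrep y hy x hx hyx, hurep y hy x hx hyx]; ring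
        _ = (∫ t in J, Lf t * u x ∂μm) + fs y * ∫ z in J, us z ∂μs := by
            rw [integral_mul_const]
        _ = ((∫ t in J, Lf t * u t ∂μm) + ∫ t in J, Lf t * (u x - u t) ∂μm)
              + fs y * ∫ z in J, us z ∂μs := by rw [e5]
        _ = (∫ t in J, Lf t * u t ∂μm)
              + ((∫ z in J, (fs z * us z - fs y * us z) ∂μs) + fs y * ∫ z in J, us z ∂μs) := by
            rw [e1, hswap1, e3]; ring
        _ = (∫ t in J, Lf t * u t ∂μm) + ∫ z in J, fs z * us z ∂μs := by
            rw [e4]; ring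
    -- PR2 chain
    have hswap2 := swap_aux μm μs y x hμmJ hμsJ u fs (u x) Bfs humJ hfsmJ hubd hfsbdJ
    have f1 : ∫ t in J, u t * (f x - f t) ∂μm
        = ∫ t in J, u t * (∫ z in Set.Ioc t x, fs z ∂μs) ∂μm := by
      refine setIntegral_congr_fun hJm (fun t ht => ?_)
      rw [hfrep t (hJI ht) x hx ht.2]
    have f2 : ∀ z ∈ J, r * (∫ t in Set.Ioo y z, u t ∂μm) = us z - us y := by
      intro z hz
      rw [setIntegral_congr_set (ioo_ae_ioc μm (hatomm z (hJI hz)) y)]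
      exact (husrep y hy z (hJI hz) hz.1.le).symm
    have f3 : r * ∫ z in J, (∫ t in Set.Ioo y z, u t ∂μm) * fs z ∂μs
        = ∫ z in J, (fs z * us z - us y * fs z) ∂μs := by
      rw [← integral_const_mul]
      refine setIntegral_congr_fun hJm (fun z hz => ?_)
      rw [← mul_assoc, f2 z hz]; ring
    have f4 : ∫ z in J, (fs z * us z - us y * fs z) ∂μs
        = (∫ z in J, fs z * us z ∂μs) - us y * ∫ z in J, fs z ∂μs := by
      rw [integral_sub intFSUS (intFS.const_mul (us y)), integral_const_mul]
    have intdiff2 : IntegrableOn (fun t => u t * (f x - f t)) J μm := by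
      have hfe : (fun t => u t * (f x - f t)) = fun t => u t * f x - u t * f t := by
        funext t; ring
      rw [hfe]; exact (intU.mul_const (f x)).sub intUF
    have f5 : ∫ t in J, u t * f x ∂μm
        = (∫ t in J, u t * f t ∂μm) + ∫ t in J, u t * (f x - f t) ∂μm := by
      rw [← integral_add intUF intdiff2]
      refine setIntegral_congr_fun hJm (fun t _ => ?_); ring
    have PR2 : f x * us x - f y * us y
        = r * (∫ t in J, u t * f t ∂μm) + ∫ z in J, fs z * us z ∂μs := by
      calc f x * us x - f y * us y
          = f x * (us x - us y) + us y * (f x - f y) := by ring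
        _ = r * ((∫ t in J, u t ∂μm) * f x) + us y * ∫ z in J, fs z ∂μs := by
            rw [husrep y hy x hx hyx, hfrep y hy x hx hyx]; ring
        _ = r * (∫ t in J, u t * f x ∂μm) + us y * ∫ z in J, fs z ∂μs := by
            rw [integral_mul_const]
        _ = r * ((∫ t in J, u t * f t ∂μm) + ∫ t in J, u t * (f x - f t) ∂μm)
              + us y * ∫ z in J, fs z ∂μs := by rw [f5]
        _ = r * (∫ t in J, u t * f t ∂μm)
              + (r * (∫ z in J, (∫ t in Set.Ioo y z, u t ∂μm) * fs z ∂μs)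
                  + us y * ∫ z in J, fs z ∂μs) := by
            rw [f1, hswap2]; ring
        _ = r * (∫ t in J, u t * f t ∂μm)
              + ((∫ z in J, (fs z * us z - us y * fs z) ∂μs) + us y * ∫ z in J, fs z ∂μs) := by
            rw [f3]
        _ = r * (∫ t in J, u t * f t ∂μm) + ∫ z in J, fs z * us z ∂μs := by
            rw [f4]; ring
    -- combine
    have comb : (u x * fs x - f x * us x) - (u y * fs y - f y * us y)
        = (∫ t in J, Lf t * u t ∂μm) - r * (∫ t in J, u t * f t ∂μm) := by
      have : (u x * fs x - f x * us x) - (u y * fs y - f y * us y)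
          = (u x * fs x - u y * fs y) - (f x * us x - f y * us y) := by ring
      rw [this, PR1, PR2]; ring
    rw [comb]
    have intRFU : IntegrableOn (fun t => r * (f t * u t)) J μm := by
      have hfe : (fun t => r * (f t * u t)) = fun t => r * (u t * f t) := by
        funext t; ring
      rw [hfe]; exact intUF.const_mul r
    rw [integral_sub intLU intRFU]
    congr 1
    have : ∫ t in J, r * (f t * u t) ∂μm = r * ∫ t in J, f t * u t ∂μm := integral_const_mul r _
    rw [this]
    congr 1
    refine setIntegral_congr_fun hJm (fun t _ => ?_); ring
  -- integrability on I ∩ Iio x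
  have hmeasIio : ∀ x : ℝ, MeasurableSet (I ∩ Set.Iio x) :=
    fun x => hIopen.measurableSet.inter measurableSet_Iio
  have hIlower : ∀ p ∈ I, ∃ q ∈ I, q < p := by
    intro p hp
    obtain ⟨ε, hε, hball⟩ := Metric.isOpen_iff.mp hIopen p hp
    refine ⟨p - ε / 2, hball ?_, by linarith⟩
    rw [Metric.mem_ball, Real.dist_eq, abs_of_nonpos (by linarith)]
    linarith
  have hUIio : ∀ x ∈ I, IntegrableOn u (I ∩ Set.Iio x) μm := by
    intro x hx
    rcases le_or_gt x c with hxc | hcx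
    · exact huintm.mono_set (Set.inter_subset_inter_right I (Set.Iio_subset_Iio hxc))
    · obtain ⟨c', hc', hc'c⟩ := hIlower c hc
      have hIcoI : Set.Ico c x ⊆ I := fun t ht => hseg hc hx ht.1 ht.2.le
      have hIcofin : μm (Set.Ico c x) ≠ ⊤ :=
        ne_top_of_le_ne_top (hμmfin c' hc' x hx)
          (measure_mono (fun t ht => ⟨hc'c.trans_le ht.1, ht.2.le⟩))
      have hIco : IntegrableOn u (Set.Ico c x) μm := by
        refine bdd_int μm _ u (u x) hIcofin (hums _ measurableSet_Ico hIcoI)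
          (fun t ht => ?_) measurableSet_Ico
        rw [abs_of_pos (hupos t (hIcoI ht))]
        exact humo (hIcoI ht) hx ht.2.le
      refine (huintm.union hIco).mono_set (fun t ht => ?_)
      rcases lt_or_ge t c with h | h
      · exact Or.inl ⟨ht.1, h⟩
      · exact Or.inr ⟨h, ht.2⟩
  have intLUIio : ∀ x ∈ I, IntegrableOn (fun t => Lf t * u t) (I ∩ Set.Iio x) μm := by
    intro x hx
    refine Integrable.mono' ((hUIio x hx).const_mul CLf)
      ((hmono_meas Lf hLfcont μm _ (hmeasIio x) Set.inter_subset_left).mul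
        (hums _ (hmeasIio x) Set.inter_subset_left)) ?_
    filter_upwards [ae_restrict_mem (hmeasIio x)] with t ht
    rw [Real.norm_eq_abs, abs_mul, abs_of_pos (hupos t ht.1)]
    exact mul_le_mul_of_nonneg_right (hLfbdd t ht.1) (hupos t ht.1).le
  have intFUIio : ∀ x ∈ I, IntegrableOn (fun t => f t * u t) (I ∩ Set.Iio x) μm := by
    intro x hx
    refine Integrable.mono' ((hUIio x hx).const_mul Cf)
      ((hmono_meas f hfcont μm _ (hmeasIio x) Set.inter_subset_left).mul
        (hums _ (hmeasIio x) Set.inter_subset_left)) ?_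
    filter_upwards [ae_restrict_mem (hmeasIio x)] with t ht
    rw [Real.norm_eq_abs, abs_mul, abs_of_pos (hupos t ht.1)]
    exact mul_le_mul_of_nonneg_right (hfbdd t ht.1) (hupos t ht.1).le
  set H : ℝ → ℝ := fun t => Lf t * u t - r * (f t * u t) with hHdef
  have intHIio : ∀ x ∈ I, IntegrableOn H (I ∩ Set.Iio x) μm := fun x hx =>
    (intLUIio x hx).sub ((intFUIio x hx).const_mul r)
  -- splitting the integral over I ∩ Iio q
  have hsplit : ∀ φ : ℝ → ℝ, ∀ p ∈ I, ∀ q ∈ I, p ≤ q →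
      IntegrableOn φ (I ∩ Set.Iio q) μm →
      (∫ t in I ∩ Set.Iio q, φ t ∂μm)
        = (∫ t in I ∩ Set.Iio p, φ t ∂μm) + ∫ t in Set.Ioc p q, φ t ∂μm := by
    intro φ p hp q hq hpq hint
    have hsetsplit : I ∩ Set.Iio q = (I ∩ Set.Iio p) ∪ Set.Ico p q := by
      ext t
      simp only [Set.mem_inter_iff, Set.mem_Iio, Set.mem_union, Set.mem_Ico]
      constructor
      · rintro ⟨htI, htq⟩
        rcases lt_or_ge t p with h | h
        · exact Or.inl ⟨htI, h⟩
        · exact Or.inr ⟨h, htq⟩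
      · rintro (⟨htI, htp⟩ | ⟨hpt, htq⟩)
        · exact ⟨htI, htp.trans_le hpq⟩
        · exact ⟨hseg hp hq hpt htq.le, htq⟩
    have hdisj : Disjoint (I ∩ Set.Iio p) (Set.Ico p q) := by
      rw [Set.disjoint_left]
      rintro t ⟨_, htp⟩ ⟨hpt, _⟩
      exact absurd hpt (not_le.mpr htp)
    rw [hsetsplit] at hint ⊢
    rw [setIntegral_union hdisj measurableSet_Ico
      (hint.mono_set Set.subset_union_left) (hint.mono_set Set.subset_union_right)]
    congr 1
    exact setIntegral_congr_set (ico_ae_ioc μm (hatomm p hp) (hatomm q hq))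
  set Qa : ℝ := (∫ t in I ∩ Set.Iio c, H t ∂μm) - (u c * fs c - f c * us c) with hQadef
  have hKEY : ∀ x ∈ I, (∫ t in I ∩ Set.Iio x, H t ∂μm)
      = Qa + (u x * fs x - f x * us x) := by
    intro x hx
    rcases le_total c x with hcx | hxc
    · have h1 := hsplit H c hc x hx hcx (intHIio x hx)
      have h2 := hstar c hc x hx hcx
      rw [hQadef]
      rw [h1, ← h2]
      ring
    · have h1 := hsplit H x hx c hc hxc (intHIio c hc)
      have h2 := hstar x hx c hc hxc
      rw [hQadef]
      rw [h1] at *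
      linarith
  -- the limit along F
  have hevI : ∀ z ∈ I, ∀ᶠ y in F, y ∈ I ∧ y < z := by
    intro z hz
    have hz' : a < (z : EReal) ∧ (z : EReal) < b := by rw [hI] at hz; exact hz
    have hmem : Set.Ioo a (z : EReal) ∈ 𝓝[>] a := Ioo_mem_nhdsGT hz'.1
    have hpre : (fun x : ℝ => (x : EReal)) ⁻¹' (Set.Ioo a (z : EReal)) ∈ F := by
      rw [hF]; exact Filter.preimage_mem_comap hmem
    refine Filter.eventually_of_mem hpre (fun y hy => ?_)
    have hy1 : a < (y : EReal) := hy.1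
    have hy2 : (y : EReal) < (z : EReal) := hy.2
    refine ⟨?_, EReal.coe_lt_coe_iff.mp hy2⟩
    rw [hI]
    exact ⟨hy1, hy2.trans hz'.2⟩
  haveI hFcg : F.IsCountablyGenerated := by rw [hF]; infer_instance
  have htendI : Tendsto (fun y => ∫ t in Set.Ioc y c, H t ∂μm) F
      (𝓝 (∫ t in I ∩ Set.Iio c, H t ∂μm)) := by
    have hdct : Tendsto (fun y => ∫ t, (Set.Ioo y c).indicator H t ∂(μm.restrict (I ∩ Set.Iio c)))
        F (𝓝 (∫ t, H t ∂(μm.restrict (I ∩ Set.Iio c)))) := by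
      refine tendsto_integral_filter_of_dominated_convergence (fun t => |H t|)
        (Filter.Eventually.of_forall (fun y =>
          ((intHIio c hc).aestronglyMeasurable).indicator measurableSet_Ioo))
        (Filter.Eventually.of_forall (fun y => ?_)) ((intHIio c hc).abs) ?_
      · exact Filter.Eventually.of_forall (fun t => by
          simpa using norm_indicator_le_norm_self (s := Set.Ioo y c) (f := H) t)
      · filter_upwards [ae_restrict_mem (hmeasIio c)] with t ht
        refine (tendsto_const_nhds (x := H t)).congr' ?_
        filter_upwards [hevI t ht.1] with y hy
        exact (Set.indicator_of_mem (Set.mem_Ioo.mpr ⟨hy.2, ht.2⟩) H).symm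
    refine hdct.congr' ?_
    filter_upwards [hevI c hc] with y hy
    have hIooSub : Set.Ioo y c ⊆ I ∩ Set.Iio c :=
      fun t ht => ⟨hseg hy.1 hc ht.1.le ht.2.le, ht.2⟩
    rw [integral_indicator measurableSet_Ioo, Measure.restrict_restrict measurableSet_Ioo,
      Set.inter_eq_left.mpr hIooSub]
    exact setIntegral_congr_set (ioo_ae_ioc μm (hatomm c hc) y)
  have htendG : Tendsto (fun z => f z * us z - u z * fs z) F (𝓝 Qa) := by
    have h1 : Tendsto (fun y => (∫ t in Set.Ioc y c, H t ∂μm) - (u c * fs c - f c * us c))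
        F (𝓝 Qa) := by
      rw [hQadef]
      exact htendI.sub_const _
    refine h1.congr' ?_
    filter_upwards [hevI c hc] with y hy
    have h2 := hstar y hy.1 c hc hy.2.le
    linarith
  refine ⟨Qa, htendG, fun x hx => ?_⟩
  have hKx := hKEY x hx
  have hsub : (∫ t in I ∩ Set.Iio x, H t ∂μm)
      = (∫ t in I ∩ Set.Iio x, Lf t * u t ∂μm)
        - r * ∫ t in I ∩ Set.Iio x, f t * u t ∂μm := by
    rw [hHdef]
    rw [integral_sub (intLUIio x hx) ((intFUIio x hx).const_mul r)]
    congr 1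
    exact integral_const_mul r _
  rw [hsub] at hKx
  linarith
end

section
/- Suppose a is an entrance boundary, i.e. u_r(a+) ∈ (0,∞) and 𝒟_s u_r(a+) = 0, and let f ∈ D(L) with f, Lf bounded continuous on (a,b). If the boundary limit Q_a = lim_{z→a+}( f(z) 𝒟_s u_r(z) − u_r(z) 𝒟_s f(z) ) equals 0, then 𝒟_s f(a+) = 0. -/
open MeasureTheory Real Filter Topology

/-- at an entrance boundary `a` (`u_r(a+) ∈ (0,∞)`, `𝒟_s u_r(a+) = 0`),
if the boundary limit `Q_a = lim_{z→a+}(f 𝒟_s u_r − u_r 𝒟_s f)(z)` equals `0`,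
then `𝒟_s f(a+) = 0`. -/
theorem entrance_boundary_derivative_vanishes
    (a b : EReal) (hab : a < b)
    (I : Set ℝ) (hI : I = {x : ℝ | a < (x : EReal) ∧ (x : EReal) < b})
    -- the filter of approach to `a` from the right within the interval
    (F : Filter ℝ) (hF : F = Filter.comap (fun x : ℝ => (x : EReal)) (𝓝[>] a))
    (s m : ℝ → ℝ)
    (hs : StrictMonoOn s I) (hscont : ContinuousOn s I)
    (hm : StrictMonoOn m I) (hmcont : ContinuousOn m I)
    (μs μm : Measure ℝ)
    (hμs : ∀ x ∈ I, ∀ y ∈ I, x ≤ y → μs (Set.Ioc x y) = ENNReal.ofReal (s y - s x))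
    (hμm : ∀ x ∈ I, ∀ y ∈ I, x ≤ y → μm (Set.Ioc x y) = ENNReal.ofReal (m y - m x))
    (r : ℝ) (hr : 0 < r)
    (u us : ℝ → ℝ)
    (hupos : ∀ x ∈ I, 0 < u x) (humono : StrictMonoOn u I)
    (hu : ∀ x ∈ I, ∀ y ∈ I, u x - u y = ∫ z in y..x, us z ∂μs)
    (hus : ∀ x ∈ I, ∀ y ∈ I, us x - us y = r * ∫ z in y..x, u z ∂μm)
    -- `a` is an entrance boundary: `u_r(a+) ∈ (0,∞)` and `𝒟_s u_r(a+) = 0`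
    (ua : ℝ) (hua : 0 < ua) (huaL : Tendsto u F (𝓝 ua))
    (husL : Tendsto us F (𝓝 0))
    -- `f ∈ D(L)` with `f`, `Lf` bounded continuous
    (f fs Lf : ℝ → ℝ)
    (hf : ∀ x ∈ I, ∀ y ∈ I, f x - f y = ∫ z in y..x, fs z ∂μs)
    (hfs : ∀ x ∈ I, ∀ y ∈ I, fs x - fs y = ∫ z in y..x, Lf z ∂μm)
    (hfcont : ContinuousOn f I) (hLfcont : ContinuousOn Lf I)
    (Cf CLf : ℝ) (hfbdd : ∀ x ∈ I, |f x| ≤ Cf) (hLfbdd : ∀ x ∈ I, |Lf x| ≤ CLf)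
    -- the boundary limit `Q_a` equals zero
    (hQa : Tendsto (fun z => f z * us z - u z * fs z) F (𝓝 0))
    -- `𝒟_s f(a+)` exists
    (dfa : ℝ) (hdfa : Tendsto fs F (𝓝 dfa)) :
    dfa = 0 := by
  subst hI hF
  set F := Filter.comap (fun x : ℝ => (x : EReal)) (𝓝[>] a) with hFdef
  have hat : a < (⊤ : EReal) := lt_of_lt_of_le hab le_top
  -- nhdsWithin Ioi a is NeBot
  have hnb : (𝓝[>] a).NeBot := nhdsGT_neBot_of_exists_gt ⟨⊤, hat⟩
  -- Ioo a ⊤ is in 𝓝[>] a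
  have hIoo : Set.Ioo a ⊤ ∈ 𝓝[>] a := by
    rw [← Set.Ioi_inter_Iio]
    exact Filter.inter_mem self_mem_nhdsWithin
      (mem_nhdsWithin_of_mem_nhds (isOpen_Iio.mem_nhds hat))
  have hFne : F.NeBot := by
    rw [Filter.comap_neBot_iff]
    intro t ht
    obtain ⟨z, hz⟩ := Filter.nonempty_of_mem (Filter.inter_mem ht hIoo)
    have hz1 : z ≠ ⊤ := hz.2.2.ne
    have hz2 : z ≠ ⊥ := (lt_of_le_of_lt bot_le hz.2.1).ne'
    lift z to ℝ using ⟨hz1, hz2⟩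
    exact ⟨z, hz.1⟩
  -- eventually x ∈ I
  have htend : Tendsto (fun x : ℝ => (x : EReal)) F (𝓝[>] a) := tendsto_comap
  have hmemI : ∀ᶠ x in F, x ∈ {x : ℝ | a < (x : EReal) ∧ (x : EReal) < b} := by
    have h1 : ∀ᶠ x : ℝ in F, a < (x : EReal) := htend self_mem_nhdsWithin
    have h2 : ∀ᶠ x : ℝ in F, (x : EReal) < b := by
      have hb : Set.Iio b ∈ 𝓝[>] a :=
        mem_nhdsWithin_of_mem_nhds (isOpen_Iio.mem_nhds hab)
      exact htend hb
    filter_upwards [h1, h2] with x hx1 hx2 using ⟨hx1, hx2⟩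
  -- f * us → 0
  have hfus : Tendsto (fun z => f z * us z) F (𝓝 0) := by
    rw [tendsto_zero_iff_abs_tendsto_zero]
    apply squeeze_zero' (Eventually.of_forall fun t => abs_nonneg _)
      (g := fun z => Cf * |us z|)
    · filter_upwards [hmemI] with x hx
      simp only [Function.comp_apply, abs_mul]
      exact mul_le_mul_of_nonneg_right (hfbdd x hx) (abs_nonneg _)
    · have habs : Tendsto (fun z => |us z|) F (𝓝 0) :=
        (tendsto_zero_iff_abs_tendsto_zero us).1 husL
      simpa using habs.const_mul Cf
  -- u * fs → 0
  have hufs : Tendsto (fun z => u z * fs z) F (𝓝 0) := by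
    have := hfus.sub hQa
    simpa using this
  have hufs2 : Tendsto (fun z => u z * fs z) F (𝓝 (ua * dfa)) := huaL.mul hdfa
  have : ua * dfa = 0 := tendsto_nhds_unique hufs2 hufs
  rcases mul_eq_zero.mp this with h | h
  · exact absurd h hua.ne'
  · exact h
end
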